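/- arXiv:1512.02328 — 4 statements merged into one kernel-verified Lean document; each statement's English description precedes it below -/
import Mathlib

section
/- In any NSB evacuation run on an initial loopless multigraph G(0) on n ≥ 2 vertices, for every frame index k′ ≥ 0: if the maximum degree at the beginning of the frame satisfies Δ(3k′) ≥ 2, then the maximum degree decreases by at least two by the end of the frame, i.e., Δ(3k′ + 3) ≤ Δ(3k′) − 2. -/
open scoped Classical

namespace NSBPaper

variable {V : Type} [Fintype V] [DecidableEq V]

/-- Degree of a vertex in a loopless multigraph given by multiplicity function `w`. -/
def deg (w : V → V → ℕ) (v : V) : ℕ := ∑ u, w v u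

/-- Maximum degree of the multigraph. -/
def maxDeg (w : V → V → ℕ) : ℕ := Finset.univ.sup fun v => deg w v

/-- The support simple graph of a multigraph: `u` and `v` are adjacent iff `u ≠ v`
and there is at least one multi-edge between them. -/
def support (w : V → V → ℕ) : SimpleGraph V where
  Adj u v := u ≠ v ∧ 1 ≤ w u v ∧ 1 ≤ w v u
  symm := ⟨fun u v h => ⟨h.1.symm, h.2.2, h.2.1⟩⟩
  loopless := ⟨fun v h => h.1 rfl⟩

/-- A set of unordered pairs `M` saturates a vertex `v` if some pair of `M` contains `v`. -/
def Saturates (M : Finset (Sym2 V)) (v : V) : Prop := ∃ e ∈ M, v ∈ e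

/-- `M` is a matching of the multigraph `w`: its elements are non-loop edges of the
support, and no two distinct elements share a vertex. -/
def IsMatching (w : V → V → ℕ) (M : Finset (Sym2 V)) : Prop :=
  (∀ e ∈ M, ¬ e.IsDiag) ∧
  (∀ u v : V, s(u, v) ∈ M → 1 ≤ w u v) ∧
  (∀ e ∈ M, ∀ f ∈ M, e ≠ f → ∀ x : V, x ∈ e → x ∉ f)

/-- `M` is a maximal matching of `w`: no pair can be added keeping it a matching. -/
def IsMaximalMatching (w : V → V → ℕ) (M : Finset (Sym2 V)) : Prop :=
  IsMatching w M ∧ ∀ e : Sym2 V, e ∉ M → ¬ IsMatching w (insert e M)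

/-- Removing a matching `M` from the multigraph `w`: the multiplicity of each pair in `M`
decreases by one. -/
def removeMatching (w : V → V → ℕ) (M : Finset (Sym2 V)) : V → V → ℕ :=
  fun u v => if s(u, v) ∈ M then w u v - 1 else w u v

/-- The subgraph of `G` induced by `Z` is bipartite: there is a set `A` such that every
edge of `G` inside `Z` joins `A` to its complement. -/
def BipartiteOn (G : SimpleGraph V) (Z : Set V) : Prop :=
  ∃ A : Set V, ∀ ⦃u v : V⦄, u ∈ Z → v ∈ Z → G.Adj u v → (u ∈ A ↔ v ∉ A)

/-- The edge multiset of `w` can be partitioned into `T` matchings. -/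
def CanEvacuate (w : V → V → ℕ) (T : ℕ) : Prop :=
  ∃ M : Fin T → Finset (Sym2 V),
    (∀ j, IsMatching w (M j)) ∧
    ∀ u v : V, (Finset.univ.filter fun j => s(u, v) ∈ M j).card = w u v

/-- The vertex-weight of a matching: the sum of the weights of its saturated vertices. -/
noncomputable def matchWeight (φ : V → ℕ) (M : Finset (Sym2 V)) : ℕ :=
  ∑ v : V, if Saturates M v then φ v else 0

/-- `Rfun M k i = 1` iff vertex `i` is saturated by the matching chosen in slot `k`. -/
noncomputable def Rfun (M : ℕ → Finset (Sym2 V)) (k : ℕ) (i : V) : ℕ :=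
  if Saturates (M k) i then 1 else 0

/-- `Ufun M k i` is `R i (k-1) * R i (k-2)` if `k ≡ 2 [MOD 3]` and `R i (k-1)` otherwise,
with `R i k = 0` for `k < 0`. -/
noncomputable def Ufun (M : ℕ → Finset (Sym2 V)) (k : ℕ) (i : V) : ℕ :=
  if k = 0 then 0
  else if k % 3 = 2 then Rfun M (k - 1) i * Rfun M (k - 2) i
  else Rfun M (k - 1) i

/-- Vertex `i` is heavy in `w`: `n * d(i) ≥ (n - 1) * Δ`. -/
def Heavy (w : V → V → ℕ) (i : V) : Prop :=
  (Fintype.card V - 1) * maxDeg w ≤ Fintype.card V * deg w i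

/-- Vertex `i` is critical in `w`: its degree is the maximum degree. -/
def Critical (w : V → V → ℕ) (i : V) : Prop := deg w i = maxDeg w

/-- The NSB weight of vertex `i`, where `u i` records whether `i` received enough
service previously. -/
noncomputable def nsbWeight (w : V → V → ℕ) (u : V → ℕ) (i : V) : ℕ :=
  if Heavy w i then deg w i * (2 - u i) else deg w i

/-- The LC-NSB weight of vertex `i`. -/
noncomputable def lcnsbWeight (w : V → V → ℕ) (u : V → ℕ) (i : V) : ℕ :=
  if Critical w i then 5 - 2 * u i
  else if Heavy w i then 4 - 2 * u i
  else 1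

/-- An NSB evacuation run on the initial multigraph `w0`: in each slot `k`, a matching
`M k` of `G k` maximizing the total NSB weight of saturated vertices is removed. -/
structure NSBRun (w0 : V → V → ℕ) where
  G : ℕ → V → V → ℕ
  M : ℕ → Finset (Sym2 V)
  init : G 0 = w0
  step : ∀ k, G (k + 1) = removeMatching (G k) (M k)
  matching : ∀ k, IsMatching (G k) (M k)
  opt : ∀ k, ∀ M' : Finset (Sym2 V), IsMatching (G k) M' →
    matchWeight (nsbWeight (G k) (Ufun M k)) M' ≤ matchWeight (nsbWeight (G k) (Ufun M k)) (M k)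

/-- An LC-NSB evacuation run on the initial multigraph `w0`. -/
structure LCNSBRun (w0 : V → V → ℕ) where
  G : ℕ → V → V → ℕ
  M : ℕ → Finset (Sym2 V)
  init : G 0 = w0
  step : ∀ k, G (k + 1) = removeMatching (G k) (M k)
  matching : ∀ k, IsMatching (G k) (M k)
  opt : ∀ k, ∀ M' : Finset (Sym2 V), IsMatching (G k) M' →
    matchWeight (lcnsbWeight (G k) (Ufun M k)) M' ≤
      matchWeight (lcnsbWeight (G k) (Ufun M k)) (M k)


section AuxMatching

variable {w : V → V → ℕ} {M : Finset (Sym2 V)} {φ : V → ℕ}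

lemma matching_unique_edge (hM : IsMatching w M) {e f : Sym2 V} (he : e ∈ M) (hf : f ∈ M)
    {x : V} (hxe : x ∈ e) (hxf : x ∈ f) : e = f := by
  by_contra hne
  exact hM.2.2 e he f hf hne x hxe hxf

lemma matchWeight_eq_sum_filter (φ : V → ℕ) (M : Finset (Sym2 V)) :
    matchWeight φ M = ∑ v ∈ Finset.univ.filter (fun v => Saturates M v), φ v := by
  rw [matchWeight, Finset.sum_filter]

lemma saturates_insert {e : Sym2 V} {v : V} :
    Saturates (insert e M) v ↔ v ∈ e ∨ Saturates M v := by
  constructor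
  · rintro ⟨f, hf, hvf⟩
    rcases Finset.mem_insert.1 hf with rfl | hf
    · exact Or.inl hvf
    · exact Or.inr ⟨f, hf, hvf⟩
  · rintro (hv | ⟨f, hf, hvf⟩)
    · exact ⟨e, Finset.mem_insert_self _ _, hv⟩
    · exact ⟨f, Finset.mem_insert_of_mem hf, hvf⟩

/-- Inserting an edge on two unsaturated vertices keeps the matching property. -/
lemma isMatching_insert (hM : IsMatching w M) {i j : V} (hij : i ≠ j)
    (hw1 : 1 ≤ w i j) (hw2 : 1 ≤ w j i)
    (hi : ¬ Saturates M i) (hj : ¬ Saturates M j) :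
    IsMatching w (insert s(i, j) M) := by
  refine ⟨?_, ?_, ?_⟩
  · intro e he
    rcases Finset.mem_insert.1 he with rfl | he
    · simpa [Sym2.mk_isDiag_iff] using hij
    · exact hM.1 e he
  · intro u v huv
    rcases Finset.mem_insert.1 huv with h | h
    · rcases Sym2.eq_iff.1 h with ⟨rfl, rfl⟩ | ⟨rfl, rfl⟩
      · exact hw1
      · exact hw2
    · exact hM.2.1 u v h
  · intro e he f hf hef x hxe hxf
    rcases Finset.mem_insert.1 he with he1 | he2
    · subst he1
      rcases Finset.mem_insert.1 hf with hf1 | hf2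
      · exact hef hf1.symm
      · rcases Sym2.mem_iff.1 hxe with h | h
        · subst h; exact hi ⟨f, hf2, hxf⟩
        · subst h; exact hj ⟨f, hf2, hxf⟩
    · rcases Finset.mem_insert.1 hf with hf1 | hf2
      · subst hf1
        rcases Sym2.mem_iff.1 hxf with h | h
        · subst h; exact hi ⟨e, he2, hxe⟩
        · subst h; exact hj ⟨e, he2, hxe⟩
      · exact hM.2.2 e he2 f hf2 hef x hxe hxf

lemma matchWeight_insert (hM : IsMatching w M) {i j : V} (hij : i ≠ j)
    (hi : ¬ Saturates M i) (hj : ¬ Saturates M j) :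
    matchWeight φ (insert s(i, j) M) = φ i + φ j + matchWeight φ M := by
  classical
  rw [matchWeight_eq_sum_filter, matchWeight_eq_sum_filter]
  have hset : Finset.univ.filter (fun v => Saturates (insert s(i,j) M) v)
      = insert i (insert j (Finset.univ.filter (fun v => Saturates M v))) := by
    ext v
    simp only [Finset.mem_filter, Finset.mem_univ, true_and, Finset.mem_insert,
      saturates_insert, Sym2.mem_iff]
    tauto
  rw [hset, Finset.sum_insert, Finset.sum_insert]
  · ring
  · simp only [Finset.mem_filter, Finset.mem_univ, true_and]
    exact hj
  · simp only [Finset.mem_insert, Finset.mem_filter, Finset.mem_univ, true_and]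
    rintro (rfl | h)
    · exact hij rfl
    · exact hi h

/-- If both ends of an edge are unsaturated by an optimal matching and one has positive
weight, contradiction. -/
lemma sat_or_sat (hM : IsMatching w M)
    (hopt : ∀ M', IsMatching w M' → matchWeight φ M' ≤ matchWeight φ M)
    {i j : V} (hij : i ≠ j) (hw1 : 1 ≤ w i j) (hw2 : 1 ≤ w j i) (hφ : 1 ≤ φ i) :
    Saturates M i ∨ Saturates M j := by
  by_contra hc
  push_neg at hc
  obtain ⟨hi, hj⟩ := hc
  have h1 := hopt _ (isMatching_insert hM hij hw1 hw2 hi hj)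
  rw [matchWeight_insert hM hij hi hj] at h1
  omega

end AuxMatching
section KeyExchange

variable {w : V → V → ℕ} {M : Finset (Sym2 V)} {φ : V → ℕ}

lemma saturates_of_edge {i j : V} (h : s(i, j) ∈ M) : Saturates M i :=
  ⟨s(i, j), h, by simp⟩

lemma edge_ne_of_matching (hM : IsMatching w M) {i j : V} (h : s(i, j) ∈ M) : i ≠ j := by
  intro hij
  exact hM.1 _ h (by simp [hij, Sym2.mk_isDiag_iff])

/-- Swap: replace edge `s(j,l) ∈ M` by `s(i,j)` where `i` is unsaturated. -/
lemma isMatching_swap (hM : IsMatching w M) {i j l : V}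
    (hjl : s(j, l) ∈ M) (hij : i ≠ j) (hw1 : 1 ≤ w i j) (hw2 : 1 ≤ w j i)
    (hi : ¬ Saturates M i) :
    IsMatching w (insert s(i, j) (M.erase s(j, l))) := by
  have herase : IsMatching w (M.erase s(j, l)) := by
    refine ⟨fun e he => hM.1 e (Finset.mem_of_mem_erase he),
      fun u v h => hM.2.1 u v (Finset.mem_of_mem_erase h),
      fun e he f hf hef x hxe hxf =>
        hM.2.2 e (Finset.mem_of_mem_erase he) f (Finset.mem_of_mem_erase hf) hef x hxe hxf⟩
  refine isMatching_insert herase hij hw1 hw2 ?_ ?_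
  · intro ⟨e, he, hie⟩
    exact hi ⟨e, Finset.mem_of_mem_erase he, hie⟩
  · intro ⟨e, he, hje⟩
    have := matching_unique_edge hM (Finset.mem_of_mem_erase he) hjl hje (by simp)
    exact (Finset.ne_of_mem_erase he) this

lemma saturates_swap_iff (hM : IsMatching w M) {i j l : V}
    (hjl : s(j, l) ∈ M) (hil : i ≠ l) (hjl' : j ≠ l) (hi : ¬ Saturates M i) {v : V} :
    Saturates (insert s(i, j) (M.erase s(j, l))) v ↔ (v = i ∨ (Saturates M v ∧ v ≠ l)) := by
  constructor
  · intro hv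
    rcases saturates_insert.1 hv with hve | ⟨e, he, hvee⟩
    · rcases Sym2.mem_iff.1 hve with h | h
      · exact Or.inl h
      · exact Or.inr ⟨⟨s(j,l), hjl, h ▸ Sym2.mem_mk_left j l⟩, h ▸ hjl'⟩
    · refine Or.inr ⟨⟨e, Finset.mem_of_mem_erase he, hvee⟩, ?_⟩
      intro hveq
      exact (Finset.ne_of_mem_erase he)
        (matching_unique_edge hM (Finset.mem_of_mem_erase he) hjl (hveq ▸ hvee)
          (Sym2.mem_mk_right j l))
  · rintro (h | ⟨⟨e, he, hve⟩, hvl⟩)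
    · exact ⟨s(i,j), Finset.mem_insert_self _ _, h ▸ Sym2.mem_mk_left i j⟩
    · by_cases hej : e = s(j, l)
      · subst hej
        rcases Sym2.mem_iff.1 hve with h | h
        · refine ⟨s(i,j), Finset.mem_insert_self _ _, h ▸ Sym2.mem_mk_right i j⟩
        · exact absurd h hvl
      · exact ⟨e, Finset.mem_insert_of_mem (Finset.mem_erase.2 ⟨hej, he⟩), hve⟩

lemma matchWeight_swap (hM : IsMatching w M) {i j l : V}
    (hjl : s(j, l) ∈ M) (hil : i ≠ l) (hjl' : j ≠ l) (hi : ¬ Saturates M i) :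
    matchWeight φ (insert s(i, j) (M.erase s(j, l))) + φ l = matchWeight φ M + φ i := by
  classical
  rw [matchWeight_eq_sum_filter, matchWeight_eq_sum_filter]
  have hset : Finset.univ.filter (fun v => Saturates (insert s(i,j) (M.erase s(j,l))) v)
      = insert i ((Finset.univ.filter (fun v => Saturates M v)).erase l) := by
    ext v
    simp only [Finset.mem_filter, Finset.mem_univ, true_and, Finset.mem_insert,
      Finset.mem_erase]
    rw [saturates_swap_iff hM hjl hil hjl' hi]
    tauto
  have hlmem : l ∈ Finset.univ.filter (fun v => Saturates M v) := by
    simp only [Finset.mem_filter, Finset.mem_univ, true_and]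
    exact ⟨s(j,l), hjl, by simp⟩
  have hinotmem : i ∉ (Finset.univ.filter (fun v => Saturates M v)).erase l := by
    simp only [Finset.mem_erase, Finset.mem_filter, Finset.mem_univ, true_and]
    rintro ⟨-, h⟩
    exact hi h
  rw [hset, Finset.sum_insert hinotmem]
  rw [add_assoc, Finset.sum_erase_add _ _ hlmem, add_comm]

/-- KEY LEMMA: an optimal matching saturates every vertex of a dominant weight class,
provided some matching saturating the whole class exists. -/
lemma key_saturation {w : V → V → ℕ} {φ : V → ℕ}
    {C : Set V} {W : ℕ} (hW1 : 1 ≤ W) (hWC : ∀ i ∈ C, φ i = W)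
    (hout : ∀ v, v ∉ C → φ v < W)
    {Mstar : Finset (Sym2 V)} (hMs : IsMatching w Mstar) (hcov : ∀ i ∈ C, Saturates Mstar i) :
    ∀ n (M : Finset (Sym2 V)), IsMatching w M →
      (∀ M', IsMatching w M' → matchWeight φ M' ≤ matchWeight φ M) →
      (Mstar \ M).card ≤ n → ∀ i ∈ C, Saturates M i := by
  intro n
  induction n with
  | zero =>
    intro M hM hopt hcard i hiC
    by_contra hunsat
    obtain ⟨e, heMs, hie⟩ := hcov i hiC
    have : e ∈ Mstar \ M := Finset.mem_sdiff.2 ⟨heMs, fun heM => hunsat ⟨e, heM, hie⟩⟩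
    have := Finset.card_pos.2 ⟨e, this⟩
    omega
  | succ n ih =>
    intro M hM hopt hcard i hiC
    by_contra hunsat
    obtain ⟨e, heMs, hie⟩ := hcov i hiC
    obtain ⟨j, heij⟩ : ∃ j, e = s(i, j) := ⟨_, (Sym2.other_spec hie).symm⟩
    have hjmem : s(i, j) ∈ Mstar := heij ▸ heMs
    have hij : i ≠ j := edge_ne_of_matching hMs hjmem
    have hwij : 1 ≤ w i j := hMs.2.1 i j hjmem
    have hwji : 1 ≤ w j i := hMs.2.1 j i (by rwa [Sym2.eq_swap])
    have heMsdiff : s(i, j) ∈ Mstar \ M :=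
      Finset.mem_sdiff.2 ⟨hjmem, fun hmem => hunsat (saturates_of_edge hmem)⟩
    by_cases hjsat : Saturates M j
    · -- j matched in M to some l
      obtain ⟨f, hfM, hjf⟩ := hjsat
      obtain ⟨l, hfjl⟩ : ∃ l, f = s(j, l) := ⟨_, (Sym2.other_spec hjf).symm⟩
      have hjlM : s(j, l) ∈ M := hfjl ▸ hfM
      have hjl' : j ≠ l := edge_ne_of_matching hM hjlM
      have hil : i ≠ l := by
        rintro rfl
        exact hunsat ⟨s(j, i), hjlM, by simp⟩
      -- the swapped matching
      have hM2 : IsMatching w (insert s(i, j) (M.erase s(j, l))) :=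
        isMatching_swap hM hjlM hij hwij hwji hunsat
      have hweq : matchWeight φ (insert s(i, j) (M.erase s(j, l))) + φ l
          = matchWeight φ M + φ i := matchWeight_swap hM hjlM hil hjl' hunsat
      by_cases hlC : l ∈ C
      · -- equal weight; recurse with smaller measure
        have hphil : φ l = W := hWC l hlC
        have hphii : φ i = W := hWC i hiC
        have hweq2 : matchWeight φ (insert s(i, j) (M.erase s(j, l))) = matchWeight φ M := by
          have h1 : φ l = φ i := by rw [hphil, hphii]
          have := hweq
          rw [h1] at this
          exact Nat.add_right_cancel this
        have hopt2 : ∀ M', IsMatching w M' →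
            matchWeight φ M' ≤ matchWeight φ (insert s(i, j) (M.erase s(j, l))) := by
          intro M' hM'
          rw [hweq2]; exact hopt M' hM'
        -- measure decreases
        have hjlnotMs : s(j, l) ∉ Mstar := by
          intro hmem
          have := matching_unique_edge hMs hmem hjmem (Sym2.mem_mk_left j l)
            (Sym2.mem_mk_right i j)
          rw [Sym2.eq_iff] at this
          rcases this with ⟨rfl, rfl⟩ | ⟨h1, h2⟩
          · exact hij rfl
          · exact hil h2.symm
        have hdiff : Mstar \ (insert s(i, j) (M.erase s(j, l)))
            = (Mstar \ M).erase s(i, j) := by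
          ext g
          simp only [Finset.mem_sdiff, Finset.mem_insert, Finset.mem_erase, not_or]
          constructor
          · rintro ⟨hgMs, hg1, hg2⟩
            refine ⟨hg1, hgMs, fun hgM => hg2 ⟨?_, hgM⟩⟩
            rintro rfl
            exact hjlnotMs hgMs
          · rintro ⟨hg1, hgMs, hgM⟩
            exact ⟨hgMs, hg1, fun hp => hgM hp.2⟩
        have hcard2 : (Mstar \ (insert s(i, j) (M.erase s(j, l)))).card ≤ n := by
          rw [hdiff]
          have := Finset.card_erase_of_mem heMsdiff
          omega
        have hsatl := ih _ hM2 hopt2 hcard2 l hlC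
        rw [saturates_swap_iff hM hjlM hil hjl' hunsat] at hsatl
        rcases hsatl with h | ⟨-, hll⟩
        · exact hil h.symm
        · exact hll rfl
      · -- strictly better matching: contradiction
        have hphil : φ l < W := hout l hlC
        have hphii : φ i = W := hWC i hiC
        have hle := hopt _ hM2
        -- hweq : wt M2 + φ l = wt M + φ i, φ l < W = φ i, wt M2 ≤ wt M : contradiction
        have : matchWeight φ M + φ i ≤ matchWeight φ M + φ l := by
          calc matchWeight φ M + φ i = matchWeight φ (insert s(i, j) (M.erase s(j, l))) + φ l :=
                hweq.symm
            _ ≤ matchWeight φ M + φ l := Nat.add_le_add_right hle _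
        have := Nat.le_of_add_le_add_left this
        omega
    · -- both i and j unsaturated: insert contradicts optimality
      have hM2 : IsMatching w (insert s(i, j) M) :=
        isMatching_insert hM hij hwij hwji hunsat hjsat
      have hle := hopt _ hM2
      rw [matchWeight_insert hM hij hunsat hjsat] at hle
      have hphii : φ i = W := hWC i hiC
      have : φ i + φ j + matchWeight φ M ≤ 0 + matchWeight φ M := by simpa using hle
      have h2 := Nat.le_of_add_le_add_right this
      omega

end KeyExchange
section Existence

/-- Selection lemma: given an injective successor map `F` on a finite set `C` whose
internal arcs alternate between two parts, one can select `S ⊆ C` such that the edges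
`{c, F c}` for `c ∈ S` are pairwise disjoint and cover all of `C`. -/
lemma select_lemma (P : V → Prop) :
    ∀ (n : ℕ) (C : Finset V) (F : V → V), C.card ≤ n →
    (∀ c ∈ C, ∀ d ∈ C, F c = F d → c = d) →
    (∀ c ∈ C, F c ≠ c) →
    (∀ c ∈ C, F c ∈ C → (P c ↔ ¬ P (F c))) →
    ∃ S : Finset V, S ⊆ C ∧ (∀ c ∈ C, c ∈ S ∨ ∃ d ∈ S, F d = c) ∧
      (∀ c ∈ S, F c ∉ S) := by
  intro n
  induction n with
  | zero =>
    intro C F hcard _ _ _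
    refine ⟨∅, Finset.empty_subset _, fun c hc => absurd (Finset.card_pos.2 ⟨c, hc⟩) (by omega),
      fun c hc => absurd hc (Finset.notMem_empty c)⟩
  | succ n ih =>
    intro C F hcard hinj hne halt
    by_cases hex : ∃ c0 ∈ C, ∀ d ∈ C, F d ≠ c0
    · obtain ⟨c0, hc0, hnopred⟩ := hex
      set C' := (C.erase c0).erase (F c0) with hC'
      have hC'sub : C' ⊆ C := fun x hx =>
        Finset.mem_of_mem_erase (Finset.mem_of_mem_erase hx)
      have hcard' : C'.card ≤ n := by
        have h1 : (C.erase c0).card = C.card - 1 := Finset.card_erase_of_mem hc0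
        have h2 : C'.card ≤ (C.erase c0).card := Finset.card_erase_le
        omega
      obtain ⟨S', hS'sub, hS'cov, hS'ind⟩ := ih C' F hcard'
        (fun c hc d hd h => hinj c (hC'sub hc) d (hC'sub hd) h)
        (fun c hc => hne c (hC'sub hc))
        (fun c hc h => halt c (hC'sub hc) (hC'sub h))
      refine ⟨insert c0 S', ?_, ?_, ?_⟩
      · intro x hx
        rcases Finset.mem_insert.1 hx with h | h
        · exact h ▸ hc0
        · exact hC'sub (hS'sub h)
      · intro c hc
        by_cases h1 : c = c0
        · exact Or.inl (Finset.mem_insert.2 (Or.inl h1))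
        by_cases h2 : c = F c0
        · exact Or.inr ⟨c0, Finset.mem_insert_self _ _, h2.symm⟩
        have hcC' : c ∈ C' := Finset.mem_erase.2 ⟨h2, Finset.mem_erase.2 ⟨h1, hc⟩⟩
        rcases hS'cov c hcC' with h | ⟨d, hd, hdf⟩
        · exact Or.inl (Finset.mem_insert_of_mem h)
        · exact Or.inr ⟨d, Finset.mem_insert_of_mem hd, hdf⟩
      · intro c hc
        rcases Finset.mem_insert.1 hc with h | h
        · intro hmem
          rcases Finset.mem_insert.1 hmem with h2 | h2
          · exact hne c (h ▸ hc0) (h ▸ h2)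
          · exact Finset.notMem_erase (F c0) _ (hS'sub (h ▸ h2))
        · intro hmem
          rcases Finset.mem_insert.1 hmem with h2 | h2
          · exact hnopred c (hC'sub (hS'sub h)) h2
          · exact hS'ind c h h2
    · -- every element has a predecessor: F restricted to C is a bijection onto C
      push_neg at hex
      refine ⟨C.filter (fun c => P c), Finset.filter_subset _ _, ?_, ?_⟩
      · intro c hc
        by_cases hPc : P c
        · exact Or.inl (Finset.mem_filter.2 ⟨hc, hPc⟩)
        · obtain ⟨d, hd, hdf⟩ := hex c hc
          have hPd : P d := by
            have := halt d hd (hdf ▸ hc)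
            rw [hdf] at this
            tauto
          exact Or.inr ⟨d, Finset.mem_filter.2 ⟨hd, hPd⟩, hdf⟩
      · intro c hc hmem
        have hc1 := Finset.mem_filter.1 hc
        have hc2 := Finset.mem_filter.1 hmem
        have := halt c hc1.1 (Finset.filter_subset _ _ hmem)
        tauto

/-- Hall's condition via degree counting: every set of critical vertices has enough
neighbours. -/
lemma exists_saturating_matching {w : V → V → ℕ}
    (hsym : ∀ u v, w u v = w v u) (hloop : ∀ v, w v v = 0)
    (hΔ : 1 ≤ maxDeg w) (P : V → Prop)
    (hbip : ∀ c d, Critical w c → Critical w d → 1 ≤ w c d → (P c ↔ ¬ P d)) :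
    ∃ Mstar : Finset (Sym2 V), IsMatching w Mstar ∧
      ∀ c, Critical w c → Saturates Mstar c := by
  classical
  set C : Finset V := Finset.univ.filter (fun v => Critical w v) with hC
  -- Hall system: neighbours
  set t : {x // x ∈ C} → Finset V := fun c => Finset.univ.filter (fun u => 1 ≤ w c.1 u) with ht
  have hall : ∀ s : Finset {x // x ∈ C}, s.card ≤ (s.biUnion t).card := by
    intro s
    set S : Finset V := s.image Subtype.val with hS
    have hScard : S.card = s.card := Finset.card_image_of_injective _ Subtype.val_injective
    set N : Finset V := s.biUnion t with hN
    have hdegN : ∀ c ∈ S, deg w c = ∑ u ∈ N, w c u := by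
      intro c hcS
      obtain ⟨c', hc's, rfl⟩ := Finset.mem_image.1 hcS
      rw [deg]
      rw [Finset.sum_subset (Finset.subset_univ N)]
      intro x _ hxN
      by_contra hx
      have hx1 : 1 ≤ w c'.1 x := Nat.one_le_iff_ne_zero.2 hx
      exact hxN (Finset.mem_biUnion.2 ⟨c', hc's, Finset.mem_filter.2 ⟨Finset.mem_univ _, hx1⟩⟩)
    have hkey : S.card * maxDeg w ≤ N.card * maxDeg w := by
      calc S.card * maxDeg w = ∑ c ∈ S, maxDeg w := by rw [Finset.sum_const, smul_eq_mul]
        _ = ∑ c ∈ S, deg w c := by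
            refine Finset.sum_congr rfl fun c hcS => ?_
            obtain ⟨c', hc's, rfl⟩ := Finset.mem_image.1 hcS
            have : Critical w c'.1 := (Finset.mem_filter.1 c'.2).2
            exact this.symm
        _ = ∑ c ∈ S, ∑ u ∈ N, w c u := Finset.sum_congr rfl hdegN
        _ = ∑ u ∈ N, ∑ c ∈ S, w c u := Finset.sum_comm
        _ = ∑ u ∈ N, ∑ c ∈ S, w u c := by
            refine Finset.sum_congr rfl fun u _ => Finset.sum_congr rfl fun c _ => hsym c u
        _ ≤ ∑ u ∈ N, deg w u := by
            refine Finset.sum_le_sum fun u _ => ?_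
            rw [deg]
            exact Finset.sum_le_sum_of_subset (Finset.subset_univ S)
        _ ≤ ∑ u ∈ N, maxDeg w := by
            refine Finset.sum_le_sum fun u _ => ?_
            exact Finset.le_sup (Finset.mem_univ u)
        _ = N.card * maxDeg w := by rw [Finset.sum_const, smul_eq_mul]
    have := Nat.le_of_mul_le_mul_right hkey hΔ
    omega
  obtain ⟨f, hfinj, hfmem⟩ := (Finset.all_card_le_biUnion_card_iff_exists_injective t).1 hall
  -- transfer to a total map
  set F : V → V := fun v => if h : v ∈ C then f ⟨v, h⟩ else v with hF
  have hFedge : ∀ c ∈ C, 1 ≤ w c (F c) := by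
    intro c hc
    have := hfmem ⟨c, hc⟩
    rw [ht] at this
    simp only [Finset.mem_filter] at this
    simpa [hF, hc] using this.2
  have hFinj : ∀ c ∈ C, ∀ d ∈ C, F c = F d → c = d := by
    intro c hc d hd h
    simp only [hF, dif_pos hc, dif_pos hd] at h
    exact Subtype.mk.injEq c hc d hd ▸ congrArg Subtype.val (hfinj h)
  have hFne : ∀ c ∈ C, F c ≠ c := by
    intro c hc h
    have := hFedge c hc
    rw [h, hloop] at this
    omega
  have hFalt : ∀ c ∈ C, F c ∈ C → (P c ↔ ¬ P (F c)) := by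
    intro c hc hfc
    exact hbip c (F c) ((Finset.mem_filter.1 hc).2) ((Finset.mem_filter.1 hfc).2)
      (hFedge c hc)
  obtain ⟨S, hSsub, hScov, hSind⟩ := select_lemma P C.card C F le_rfl hFinj hFne hFalt
  refine ⟨S.image (fun c => s(c, F c)), ⟨?_, ?_, ?_⟩, ?_⟩
  · intro e he
    obtain ⟨c, hcS, rfl⟩ := Finset.mem_image.1 he
    simp only [Sym2.mk_isDiag_iff]
    exact fun h => hFne c (hSsub hcS) h.symm
  · intro u v huv
    obtain ⟨c, hcS, hce⟩ := Finset.mem_image.1 huv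
    rcases Sym2.eq_iff.1 hce with ⟨h1, h2⟩ | ⟨h1, h2⟩
    · rw [← h1, ← h2]; exact hFedge c (hSsub hcS)
    · rw [← h1, ← h2, hsym]; exact hFedge c (hSsub hcS)
  · intro e he g hg heg x hxe hxg
    obtain ⟨c, hcS, rfl⟩ := Finset.mem_image.1 he
    obtain ⟨d, hdS, rfl⟩ := Finset.mem_image.1 hg
    have hcd : c ≠ d := fun h => heg (by rw [h])
    rcases Sym2.mem_iff.1 hxe with rfl | rfl <;> rcases Sym2.mem_iff.1 hxg with h | h
    · exact hcd h
    · exact hSind d hdS (h ▸ hcS)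
    · exact hSind c hcS (h.symm ▸ hdS)
    · exact hcd (hFinj c (hSsub hcS) d (hSsub hdS) h)
  · intro c hcrit
    have hcC : c ∈ C := Finset.mem_filter.2 ⟨Finset.mem_univ _, hcrit⟩
    rcases hScov c hcC with h | ⟨d, hdS, hdf⟩
    · exact ⟨s(c, F c), Finset.mem_image_of_mem _ h, Sym2.mem_mk_left _ _⟩
    · exact ⟨s(d, F d), Finset.mem_image_of_mem _ hdS, hdf ▸ Sym2.mem_mk_right _ _⟩

end Existence
section RunLemmas

variable {w : V → V → ℕ} {M : Finset (Sym2 V)}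

lemma deg_removeMatching (hM : IsMatching w M) (i : V) :
    deg (removeMatching w M) i + (if Saturates M i then 1 else 0) = deg w i := by
  classical
  by_cases hsat : Saturates M i
  · obtain ⟨e, he, hie⟩ := hsat
    obtain ⟨j, heij⟩ : ∃ j, e = s(i, j) := ⟨_, (Sym2.other_spec hie).symm⟩
    subst heij
    have hij : i ≠ j := edge_ne_of_matching hM he
    have hwij : 1 ≤ w i j := hM.2.1 i j he
    have huniq : ∀ u : V, s(i, u) ∈ M ↔ u = j := by
      intro u
      constructor
      · intro hu
        have heq := matching_unique_edge hM hu he (Sym2.mem_mk_left i u) (Sym2.mem_mk_left i j)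
        rcases Sym2.eq_iff.1 heq with ⟨-, h⟩ | ⟨h1, h2⟩
        · exact h
        · exact absurd h1 hij
      · rintro rfl; exact he
    have hip : Saturates M i := ⟨s(i,j), he, Sym2.mem_mk_left i j⟩
    rw [if_pos hip]
    have hjmem : j ∈ Finset.univ := Finset.mem_univ j
    rw [deg, deg]
    rw [← Finset.sum_erase_add _ _ hjmem, ← Finset.sum_erase_add _ (fun u => w i u) hjmem]
    have h1 : ∀ u ∈ Finset.univ.erase j, removeMatching w M i u = w i u := by
      intro u hu
      have : s(i, u) ∉ M := fun hc => (Finset.mem_erase.1 hu).1 ((huniq u).1 hc)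
      rw [removeMatching, if_neg this]
    have hs : ∑ u ∈ Finset.univ.erase j, removeMatching w M i u
        = ∑ u ∈ Finset.univ.erase j, w i u := Finset.sum_congr rfl h1
    have h2 : removeMatching w M i j = w i j - 1 := by
      rw [removeMatching, if_pos he]
    rw [hs, h2]
    omega
  · rw [if_neg hsat]
    rw [deg, deg, Nat.add_zero]
    refine Finset.sum_congr rfl fun u _ => ?_
    have : s(i, u) ∉ M := fun hc => hsat ⟨s(i,u), hc, Sym2.mem_mk_left i u⟩
    rw [removeMatching, if_neg this]

variable {w0 : V → V → ℕ}

lemma G_symm (run : NSBRun w0) (hsymm : ∀ u v, w0 u v = w0 v u) :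
    ∀ k u v, run.G k u v = run.G k v u := by
  intro k
  induction k with
  | zero => rw [run.init]; exact hsymm
  | succ k ih =>
    intro u v
    rw [run.step k, removeMatching, removeMatching]
    rw [Sym2.eq_swap (a := v)]
    rw [ih u v]

lemma G_loopless (run : NSBRun w0) (hloop : ∀ v, w0 v v = 0) :
    ∀ k v, run.G k v v = 0 := by
  intro k
  induction k with
  | zero => rw [run.init]; exact hloop
  | succ k ih =>
    intro v
    rw [run.step k, removeMatching]
    have hnm : s(v, v) ∉ run.M k := fun hc => (run.matching k).1 _ hc (by simp)
    rw [if_neg hnm]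
    exact ih v

lemma deg_step (run : NSBRun w0) (k : ℕ) (i : V) :
    deg (run.G (k + 1)) i + Rfun run.M k i = deg (run.G k) i := by
  rw [run.step k, Rfun]
  exact deg_removeMatching (run.matching k) i

lemma deg_le_maxDeg (w : V → V → ℕ) (i : V) : deg w i ≤ maxDeg w :=
  Finset.le_sup (Finset.mem_univ i)

lemma Rfun_le_one (M : ℕ → Finset (Sym2 V)) (k : ℕ) (i : V) : Rfun M k i ≤ 1 := by
  rw [Rfun]; split <;> omega

lemma Ufun_le_one (M : ℕ → Finset (Sym2 V)) (k : ℕ) (i : V) : Ufun M k i ≤ 1 := by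
  rw [Ufun]
  split
  · omega
  split
  · have h1 := Rfun_le_one M (k-1) i
    have h2 := Rfun_le_one M (k-2) i
    calc Rfun M (k-1) i * Rfun M (k-2) i ≤ 1 * 1 := Nat.mul_le_mul h1 h2
      _ = 1 := by norm_num
  · exact Rfun_le_one M (k-1) i

lemma deg_mono (run : NSBRun w0) (k : ℕ) (i : V) :
    deg (run.G (k + 1)) i ≤ deg (run.G k) i := by
  have := deg_step run k i
  omega

lemma maxDeg_mono (run : NSBRun w0) (k : ℕ) :
    maxDeg (run.G (k + 1)) ≤ maxDeg (run.G k) := by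
  refine Finset.sup_le fun v _ => ?_
  exact le_trans (deg_mono run k v) (deg_le_maxDeg _ v)

lemma exists_critical (w : V → V → ℕ) (hV : (Finset.univ : Finset V).Nonempty) :
    ∃ c, Critical w c := by
  obtain ⟨c, -, hc⟩ := Finset.exists_mem_eq_sup Finset.univ hV (fun v => deg w v)
  exact ⟨c, hc.symm⟩

lemma maxDeg_step_ge (run : NSBRun w0) (hV : (Finset.univ : Finset V).Nonempty) (k : ℕ) :
    maxDeg (run.G k) ≤ maxDeg (run.G (k + 1)) + 1 := by
  obtain ⟨c, hc⟩ := exists_critical (run.G k) hV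
  have h1 := deg_step run k c
  have h2 := Rfun_le_one run.M k c
  have h3 := deg_le_maxDeg (run.G (k+1)) c
  rw [Critical] at hc
  omega

/-- If all critical vertices are saturated, the maximum degree strictly decreases. -/
lemma maxDeg_good_step (run : NSBRun w0) (k : ℕ) (hΔ : 1 ≤ maxDeg (run.G k))
    (hgood : ∀ i, Critical (run.G k) i → Saturates (run.M k) i) :
    maxDeg (run.G (k + 1)) + 1 ≤ maxDeg (run.G k) := by
  have : maxDeg (run.G (k+1)) < maxDeg (run.G k) := by
    rw [maxDeg, Finset.sup_lt_iff (show (⊥:ℕ) < maxDeg (run.G k) from hΔ)]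
    intro v _
    have h1 := deg_step run k v
    by_cases hcrit : Critical (run.G k) v
    · have hsat := hgood v hcrit
      have : Rfun run.M k v = 1 := by rw [Rfun, if_pos hsat]
      rw [Critical] at hcrit
      omega
    · have h2 : deg (run.G k) v < maxDeg (run.G k) :=
        lt_of_le_of_ne (deg_le_maxDeg _ v) hcrit
      omega
  omega

/-- If some critical vertex is unsaturated, the maximum degree is unchanged. -/
lemma maxDeg_bad_step (run : NSBRun w0) (k : ℕ)
    {i : V} (hcrit : Critical (run.G k) i) (hunsat : ¬ Saturates (run.M k) i) :
    maxDeg (run.G (k + 1)) = maxDeg (run.G k) := by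
  refine le_antisymm (maxDeg_mono run k) ?_
  have h1 := deg_step run k i
  have h2 : Rfun run.M k i = 0 := by rw [Rfun, if_neg hunsat]
  have h3 := deg_le_maxDeg (run.G (k+1)) i
  rw [Critical] at hcrit
  omega

lemma critical_heavy {w : V → V → ℕ} {i : V} (h : Critical w i) : Heavy w i := by
  rw [Heavy, h]
  exact Nat.mul_le_mul_right _ (Nat.sub_le _ _)

lemma nsbWeight_ge_deg {w : V → V → ℕ} {u : V → ℕ} (hu : ∀ i, u i ≤ 1) (i : V) :
    deg w i ≤ nsbWeight w u i := by
  rw [nsbWeight]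
  split
  · have : 1 ≤ 2 - u i := by have := hu i; omega
    calc deg w i = deg w i * 1 := (Nat.mul_one _).symm
      _ ≤ deg w i * (2 - u i) := Nat.mul_le_mul_left _ this
  · exact le_rfl

lemma nsbWeight_le_two_deg {w : V → V → ℕ} {u : V → ℕ} (i : V) :
    nsbWeight w u i ≤ 2 * deg w i := by
  rw [nsbWeight]
  split
  · calc deg w i * (2 - u i) ≤ deg w i * 2 := Nat.mul_le_mul_left _ (by omega)
      _ = 2 * deg w i := Nat.mul_comm _ _
  · omega

lemma nsbWeight_critical {w : V → V → ℕ} {u : V → ℕ} {i : V}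
    (hcrit : Critical w i) (hu : u i = 0) : nsbWeight w u i = 2 * maxDeg w := by
  rw [nsbWeight, if_pos (critical_heavy hcrit), hu, hcrit]
  ring

/-- Every vertex incident to an edge has positive weight. -/
lemma nsbWeight_pos {w : V → V → ℕ} {u : V → ℕ} (hu : ∀ i, u i ≤ 1) {i j : V}
    (hw : 1 ≤ w i j) : 1 ≤ nsbWeight w u i := by
  have h1 : w i j ≤ deg w i := Finset.single_le_sum (fun u _ => Nat.zero_le _) (Finset.mem_univ j)
  have h2 := nsbWeight_ge_deg (w := w) hu i
  omega

/-- Two adjacent vertices cannot both be unsaturated by the chosen matching. -/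
lemma sat_or_sat_run (run : NSBRun w0) (k : ℕ) {i j : V} (hij : i ≠ j)
    (h1 : 1 ≤ run.G k i j) (h2 : 1 ≤ run.G k j i) :
    Saturates (run.M k) i ∨ Saturates (run.M k) j := by
  refine sat_or_sat (run.matching k) (run.opt k) hij h1 h2 ?_
  exact nsbWeight_pos (fun v => Ufun_le_one run.M k v) h1

end RunLemmas
section SlotGood

variable {w0 : V → V → ℕ}

lemma w_mono (run : NSBRun w0) (k : ℕ) (u v : V) : run.G (k + 1) u v ≤ run.G k u v := by
  rw [run.step k, removeMatching]
  split <;> omega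

lemma Ufun_one (M : ℕ → Finset (Sym2 V)) (k' : ℕ) (i : V) :
    Ufun M (3 * k' + 1) i = Rfun M (3 * k') i := by
  rw [Ufun, if_neg (by omega), if_neg (by omega)]
  have h : 3 * k' + 1 - 1 = 3 * k' := by omega
  rw [h]

lemma Ufun_two (M : ℕ → Finset (Sym2 V)) (k' : ℕ) (i : V) :
    Ufun M (3 * k' + 2) i = Rfun M (3 * k' + 1) i * Rfun M (3 * k') i := by
  rw [Ufun, if_neg (by omega), if_pos (by omega)]
  have h1 : 3 * k' + 2 - 1 = 3 * k' + 1 := by omega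
  have h2 : 3 * k' + 2 - 2 = 3 * k' := by omega
  rw [h1, h2]

/-- The slot-goodness engine: if in slot `k` all critical vertices have `U = 0` and the
critical set has bipartite interior, then the chosen matching saturates all critical
vertices. -/
lemma slot_good (run : NSBRun w0) (hsymm : ∀ u v, w0 u v = w0 v u)
    (hloop : ∀ v, w0 v v = 0) (k : ℕ) (hΔ : 1 ≤ maxDeg (run.G k))
    (hU : ∀ i, Critical (run.G k) i → Ufun run.M k i = 0)
    (P : V → Prop)
    (hbip : ∀ c d, Critical (run.G k) c → Critical (run.G k) d →
      1 ≤ run.G k c d → (P c ↔ ¬ P d)) :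
    ∀ i, Critical (run.G k) i → Saturates (run.M k) i := by
  obtain ⟨Mstar, hMs, hcov⟩ := exists_saturating_matching
    (G_symm run hsymm k) (G_loopless run hloop k) hΔ P hbip
  have hW1 : 1 ≤ 2 * maxDeg (run.G k) := by omega
  have hWC : ∀ i ∈ {v | Critical (run.G k) v},
      nsbWeight (run.G k) (Ufun run.M k) i = 2 * maxDeg (run.G k) := by
    intro i hi
    exact nsbWeight_critical hi (hU i hi)
  have hout : ∀ v, v ∉ {v | Critical (run.G k) v} →
      nsbWeight (run.G k) (Ufun run.M k) v < 2 * maxDeg (run.G k) := by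
    intro v hv
    have h1 := nsbWeight_le_two_deg (w := run.G k) (u := Ufun run.M k) v
    have h2 : deg (run.G k) v < maxDeg (run.G k) :=
      lt_of_le_of_ne (deg_le_maxDeg _ v) hv
    omega
  intro i hi
  exact key_saturation hW1 hWC hout hMs (fun c hc => hcov c hc)
    (Mstar \ run.M k).card (run.M k) (run.matching k) (run.opt k) le_rfl i hi

end SlotGood
section FinalAux

variable {w0 : V → V → ℕ}

lemma not_sat_of_R0 {M : ℕ → Finset (Sym2 V)} {k : ℕ} {i : V} (h : Rfun M k i = 0) :
    ¬ Saturates (M k) i := by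
  intro hx; rw [Rfun, if_pos hx] at h; omega

lemma R0_of_not_sat {M : ℕ → Finset (Sym2 V)} {k : ℕ} {i : V} (h : ¬ Saturates (M k) i) :
    Rfun M k i = 0 := by
  rw [Rfun, if_neg h]

lemma R1_of_sat {M : ℕ → Finset (Sym2 V)} {k : ℕ} {i : V} (h : Saturates (M k) i) :
    Rfun M k i = 1 := by
  rw [Rfun, if_pos h]

end FinalAux

theorem nsb_frame_decrease' {V : Type} [Fintype V] [DecidableEq V]
    (w0 : V → V → ℕ) (hsymm : ∀ u v, w0 u v = w0 v u) (hloop : ∀ v, w0 v v = 0)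
    (hn : 2 ≤ Fintype.card V)
    (run : NSBRun w0) (k' : ℕ)
    (h : 2 ≤ maxDeg (run.G (3 * k'))) :
    maxDeg (run.G (3 * k' + 3)) ≤ maxDeg (run.G (3 * k')) - 2 := by
  have hV : (Finset.univ : Finset V).Nonempty := by
    rw [← Finset.card_pos, Finset.card_univ]; omega
  have hloop0 : ∀ k v, run.G k v v = 0 := G_loopless run hloop
  have hsym0 : ∀ k u v, run.G k u v = run.G k v u := G_symm run hsymm
  by_cases hbad0 : ∃ i, Critical (run.G (3 * k')) i ∧ ¬ Saturates (run.M (3 * k')) i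
  · -- slot 3k' is bad; then slots 3k'+1 and 3k'+2 are both good
    obtain ⟨i0, hi0c, hi0u⟩ := hbad0
    have hEq1 : maxDeg (run.G (3 * k' + 1)) = maxDeg (run.G (3 * k')) :=
      maxDeg_bad_step run (3 * k') hi0c hi0u
    have hunsat1 : ∀ i, Critical (run.G (3 * k' + 1)) i → Rfun run.M (3 * k') i = 0 := by
      intro i hc
      have h1 : deg (run.G (3 * k' + 1)) i + Rfun run.M (3 * k') i = deg (run.G (3 * k')) i :=
        deg_step run (3 * k') i
      have h2 := deg_le_maxDeg (run.G (3 * k')) i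
      rw [Critical, hEq1] at hc
      omega
    have hU1 : ∀ i, Critical (run.G (3 * k' + 1)) i → Ufun run.M (3 * k' + 1) i = 0 := by
      intro i hc
      rw [Ufun_one]
      exact hunsat1 i hc
    have hΔ1 : 1 ≤ maxDeg (run.G (3 * k' + 1)) := by omega
    have hbip1 : ∀ c d, Critical (run.G (3 * k' + 1)) c → Critical (run.G (3 * k' + 1)) d →
        1 ≤ run.G (3 * k' + 1) c d →
        ((fun (_ : V) => True) c ↔ ¬ (fun (_ : V) => True) d) := by
      intro c d hc hd hadj
      exfalso
      have hcd : c ≠ d := by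
        rintro rfl
        have := hloop0 (3 * k' + 1) c
        omega
      have hadj0 : 1 ≤ run.G (3 * k') c d := le_trans hadj (w_mono run (3 * k') c d)
      have hadj0' : 1 ≤ run.G (3 * k') d c := by rw [hsym0 (3 * k') d c]; exact hadj0
      rcases sat_or_sat_run run (3 * k') hcd hadj0 hadj0' with hs | hs
      · exact not_sat_of_R0 (hunsat1 c hc) hs
      · exact not_sat_of_R0 (hunsat1 d hd) hs
    have hgood1 := slot_good run hsymm hloop (3 * k' + 1) hΔ1 hU1 (fun _ => True) hbip1
    have hstep1 : maxDeg (run.G (3 * k' + 2)) + 1 ≤ maxDeg (run.G (3 * k' + 1)) :=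
      maxDeg_good_step run (3 * k' + 1) hΔ1 hgood1
    have hlow1 : maxDeg (run.G (3 * k' + 1)) ≤ maxDeg (run.G (3 * k' + 2)) + 1 :=
      maxDeg_step_ge run hV (3 * k' + 1)
    -- slot 3k'+2
    have hΔ2 : 1 ≤ maxDeg (run.G (3 * k' + 2)) := by omega
    have hcrit2 : ∀ i, Critical (run.G (3 * k' + 2)) i →
        Rfun run.M (3 * k') i + Rfun run.M (3 * k' + 1) i ≤ 1 := by
      intro i hc
      have h1 : deg (run.G (3 * k' + 1)) i + Rfun run.M (3 * k') i = deg (run.G (3 * k')) i :=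
        deg_step run (3 * k') i
      have h2 : deg (run.G (3 * k' + 2)) i + Rfun run.M (3 * k' + 1) i
          = deg (run.G (3 * k' + 1)) i := deg_step run (3 * k' + 1) i
      have h3 := deg_le_maxDeg (run.G (3 * k')) i
      rw [Critical] at hc
      omega
    have hU2 : ∀ i, Critical (run.G (3 * k' + 2)) i → Ufun run.M (3 * k' + 2) i = 0 := by
      intro i hc
      rw [Ufun_two]
      have h1 := hcrit2 i hc
      have h2 := Rfun_le_one run.M (3 * k') i
      have h3 := Rfun_le_one run.M (3 * k' + 1) i
      rcases (by omega : Rfun run.M (3 * k' + 1) i = 0 ∨ Rfun run.M (3 * k') i = 0) with hz | hz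
      · rw [hz, zero_mul]
      · rw [hz, mul_zero]
    have hbip2 : ∀ c d, Critical (run.G (3 * k' + 2)) c → Critical (run.G (3 * k' + 2)) d →
        1 ≤ run.G (3 * k' + 2) c d →
        ((fun v => ¬ Saturates (run.M (3 * k')) v) c ↔
          ¬ (fun v => ¬ Saturates (run.M (3 * k')) v) d) := by
      intro c d hc hd hadj
      simp only []
      have hcd : c ≠ d := by
        rintro rfl
        have := hloop0 (3 * k' + 2) c
        omega
      have hadj1 : 1 ≤ run.G (3 * k' + 1) c d := le_trans hadj (w_mono run (3 * k' + 1) c d)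
      have hadj1' : 1 ≤ run.G (3 * k' + 1) d c := by rw [hsym0 (3 * k' + 1) d c]; exact hadj1
      have hadj0 : 1 ≤ run.G (3 * k') c d := le_trans hadj1 (w_mono run (3 * k') c d)
      have hadj0' : 1 ≤ run.G (3 * k') d c := by rw [hsym0 (3 * k') d c]; exact hadj0
      have hor : Saturates (run.M (3 * k')) c ∨ Saturates (run.M (3 * k')) d :=
        sat_or_sat_run run (3 * k') hcd hadj0 hadj0'
      have hnand : ¬ (Saturates (run.M (3 * k')) c ∧ Saturates (run.M (3 * k')) d) := by
        rintro ⟨hsc, hsd⟩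
        have hc1 := hcrit2 c hc
        have hd1 := hcrit2 d hd
        have hRc := R1_of_sat (M := run.M) hsc
        have hRd := R1_of_sat (M := run.M) hsd
        have husc : ¬ Saturates (run.M (3 * k' + 1)) c := not_sat_of_R0 (by omega)
        have husd : ¬ Saturates (run.M (3 * k' + 1)) d := not_sat_of_R0 (by omega)
        rcases sat_or_sat_run run (3 * k' + 1) hcd hadj1 hadj1' with hs | hs
        · exact husc hs
        · exact husd hs
      tauto
    have hgood2 := slot_good run hsymm hloop (3 * k' + 2) hΔ2 hU2
      (fun v => ¬ Saturates (run.M (3 * k')) v) hbip2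
    have hstep2 : maxDeg (run.G (3 * k' + 3)) + 1 ≤ maxDeg (run.G (3 * k' + 2)) :=
      maxDeg_good_step run (3 * k' + 2) hΔ2 hgood2
    omega
  · -- slot 3k' is good
    push_neg at hbad0
    have hΔ0 : 1 ≤ maxDeg (run.G (3 * k')) := by omega
    have hstep0 : maxDeg (run.G (3 * k' + 1)) + 1 ≤ maxDeg (run.G (3 * k')) :=
      maxDeg_good_step run (3 * k') hΔ0 hbad0
    by_cases hΔ1 : 1 ≤ maxDeg (run.G (3 * k' + 1))
    · by_cases hbad1 : ∃ i, Critical (run.G (3 * k' + 1)) i ∧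
          ¬ Saturates (run.M (3 * k' + 1)) i
      · obtain ⟨i1, hi1c, hi1u⟩ := hbad1
        have hEq2 : maxDeg (run.G (3 * k' + 2)) = maxDeg (run.G (3 * k' + 1)) :=
          maxDeg_bad_step run (3 * k' + 1) hi1c hi1u
        have hunsat2 : ∀ i, Critical (run.G (3 * k' + 2)) i →
            Rfun run.M (3 * k' + 1) i = 0 := by
          intro i hc
          have h1 : deg (run.G (3 * k' + 2)) i + Rfun run.M (3 * k' + 1) i
              = deg (run.G (3 * k' + 1)) i := deg_step run (3 * k' + 1) i
          have h2 := deg_le_maxDeg (run.G (3 * k' + 1)) i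
          rw [Critical, hEq2] at hc
          omega
        have hU2 : ∀ i, Critical (run.G (3 * k' + 2)) i → Ufun run.M (3 * k' + 2) i = 0 := by
          intro i hc
          rw [Ufun_two, hunsat2 i hc, zero_mul]
        have hΔ2 : 1 ≤ maxDeg (run.G (3 * k' + 2)) := by omega
        have hbip2 : ∀ c d, Critical (run.G (3 * k' + 2)) c →
            Critical (run.G (3 * k' + 2)) d → 1 ≤ run.G (3 * k' + 2) c d →
            ((fun (_ : V) => True) c ↔ ¬ (fun (_ : V) => True) d) := by
          intro c d hc hd hadj
          exfalso
          have hcd : c ≠ d := by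
            rintro rfl
            have := hloop0 (3 * k' + 2) c
            omega
          have hadj1 : 1 ≤ run.G (3 * k' + 1) c d :=
            le_trans hadj (w_mono run (3 * k' + 1) c d)
          have hadj1' : 1 ≤ run.G (3 * k' + 1) d c := by
            rw [hsym0 (3 * k' + 1) d c]; exact hadj1
          rcases sat_or_sat_run run (3 * k' + 1) hcd hadj1 hadj1' with hs | hs
          · exact not_sat_of_R0 (hunsat2 c hc) hs
          · exact not_sat_of_R0 (hunsat2 d hd) hs
        have hgood2 := slot_good run hsymm hloop (3 * k' + 2) hΔ2 hU2 (fun _ => True) hbip2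
        have hstep2 : maxDeg (run.G (3 * k' + 3)) + 1 ≤ maxDeg (run.G (3 * k' + 2)) :=
          maxDeg_good_step run (3 * k' + 2) hΔ2 hgood2
        omega
      · push_neg at hbad1
        have hstep1 : maxDeg (run.G (3 * k' + 2)) + 1 ≤ maxDeg (run.G (3 * k' + 1)) :=
          maxDeg_good_step run (3 * k' + 1) hΔ1 hbad1
        have hmono : maxDeg (run.G (3 * k' + 3)) ≤ maxDeg (run.G (3 * k' + 2)) :=
          maxDeg_mono run (3 * k' + 2)
        omega
    · have h1 : maxDeg (run.G (3 * k' + 2)) ≤ maxDeg (run.G (3 * k' + 1)) :=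
        maxDeg_mono run (3 * k' + 1)
      have h2 : maxDeg (run.G (3 * k' + 3)) ≤ maxDeg (run.G (3 * k' + 2)) :=
        maxDeg_mono run (3 * k' + 2)
      omega

/-- In any NSB evacuation run, if `Δ(3k′) ≥ 2` then
`Δ(3k′ + 3) ≤ Δ(3k′) − 2`. -/
theorem nsb_frame_decrease {V : Type} [Fintype V] [DecidableEq V]
    (w0 : V → V → ℕ) (hsymm : ∀ u v, w0 u v = w0 v u) (hloop : ∀ v, w0 v v = 0)
    (hn : 2 ≤ Fintype.card V)
    (run : NSBRun w0) (k' : ℕ)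
    (h : 2 ≤ maxDeg (run.G (3 * k'))) :
    maxDeg (run.G (3 * k' + 3)) ≤ maxDeg (run.G (3 * k')) - 2 := by
  exact nsb_frame_decrease' w0 hsymm hloop hn run k' h

end NSBPaper
end

section
/- Let G be a loopless multigraph on n ≥ 2 vertices with maximum degree Δ ≥ 1, and let Z be a subset of the vertex set such that (i) every vertex v ∈ Z is heavy, i.e., n·d(v) ≥ (n−1)·Δ, and (ii) the subgraph of the support of G induced by Z is bipartite. Then there exists a matching of G that saturates every vertex of Z. -/
open scoped Classical

namespace NSBPaper

variable {V : Type} [Fintype V] [DecidableEq V]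

section Aux

variable {V : Type} [Fintype V] [DecidableEq V]

/-- Counting lemma: Hall's condition for subsets of the heavy set. -/
lemma hall_count (w : V → V → ℕ) (hsymm : ∀ u v, w u v = w v u) (hloop : ∀ v, w v v = 0)
    (hn : 2 ≤ Fintype.card V) (hΔ : 1 ≤ maxDeg w)
    (Z : Set V)
    (hheavy : ∀ v ∈ Z, (Fintype.card V - 1) * maxDeg w ≤ Fintype.card V * deg w v)
    (s : Finset V) (hsZ : ∀ v ∈ s, v ∈ Z) :
    s.card ≤ (s.biUnion (fun v => Finset.univ.filter (fun u => (support w).Adj v u))).card := by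
  classical
  set n := Fintype.card V with hn'
  set nbr : V → Finset V := fun v => Finset.univ.filter (fun u => (support w).Adj v u) with hnbr
  set N := s.biUnion nbr with hNdef
  -- each vertex of s sends all its edges into N
  have hdeg_eq : ∀ v ∈ s, deg w v = ∑ u ∈ N, w v u := by
    intro v hv
    rw [deg]
    refine (Finset.sum_subset (Finset.subset_univ N) ?_).symm
    intro x _ hx
    by_contra hne
    have h1 : 1 ≤ w v x := Nat.one_le_iff_ne_zero.mpr hne
    have hxv : x ≠ v := by
      rintro rfl; rw [hloop] at h1; omega
    have hmem : x ∈ nbr v := by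
      simp only [hnbr, Finset.mem_filter, Finset.mem_univ, true_and]
      exact ⟨Ne.symm hxv, h1, by rw [← hsymm]; exact h1⟩
    exact hx (Finset.mem_biUnion.mpr ⟨v, hv, hmem⟩)
  have h2 : ∑ v ∈ s, deg w v ≤ N.card * maxDeg w := by
    calc ∑ v ∈ s, deg w v = ∑ v ∈ s, ∑ u ∈ N, w v u := Finset.sum_congr rfl hdeg_eq
      _ = ∑ u ∈ N, ∑ v ∈ s, w v u := Finset.sum_comm
      _ ≤ ∑ u ∈ N, deg w u := by
          refine Finset.sum_le_sum (fun u _ => ?_)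
          calc ∑ v ∈ s, w v u ≤ ∑ v : V, w v u :=
                Finset.sum_le_sum_of_subset (Finset.subset_univ s)
            _ = ∑ v : V, w u v := Finset.sum_congr rfl (fun v _ => (hsymm u v).symm)
            _ = deg w u := rfl
      _ ≤ ∑ _u ∈ N, maxDeg w := by
          refine Finset.sum_le_sum (fun u _ => ?_)
          exact Finset.le_sup (Finset.mem_univ u)
      _ = N.card * maxDeg w := by rw [Finset.sum_const, smul_eq_mul]
  have h3 : s.card * ((n - 1) * maxDeg w) ≤ n * (N.card * maxDeg w) := by
    calc s.card * ((n - 1) * maxDeg w) = ∑ _v ∈ s, (n - 1) * maxDeg w := by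
          rw [Finset.sum_const, smul_eq_mul]
      _ ≤ ∑ v ∈ s, n * deg w v := Finset.sum_le_sum (fun v hv => hheavy v (hsZ v hv))
      _ = n * ∑ v ∈ s, deg w v := by rw [Finset.mul_sum]
      _ ≤ n * (N.card * maxDeg w) := Nat.mul_le_mul_left _ h2
  have h4 : s.card * (n - 1) ≤ n * N.card := by
    have h5 : s.card * (n - 1) * maxDeg w ≤ n * N.card * maxDeg w := by
      calc s.card * (n - 1) * maxDeg w = s.card * ((n - 1) * maxDeg w) := by ring
        _ ≤ n * (N.card * maxDeg w) := h3
        _ = n * N.card * maxDeg w := by ring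
    exact Nat.le_of_mul_le_mul_right h5 (by omega)
  by_contra hlt
  push_neg at hlt
  -- then s.card = n
  have hsn : n ≤ s.card := by
    obtain ⟨m, hm⟩ : ∃ m, n = m + 1 := ⟨n - 1, by omega⟩
    rw [hm] at h4 ⊢
    simp only [Nat.add_sub_cancel] at h4
    have hb : N.card + 1 ≤ s.card := hlt
    have key : s.card * m + (m + 1) ≤ s.card * m + s.card := by
      calc s.card * m + (m + 1) ≤ (m + 1) * N.card + (m + 1) := by
            have := h4; omega
        _ = (m + 1) * (N.card + 1) := by ring
        _ ≤ (m + 1) * s.card := Nat.mul_le_mul_left _ hb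
        _ = s.card * m + s.card := by ring
    omega
  have hscard : s.card = n := le_antisymm (by simpa [hn'] using Finset.card_le_univ s) hsn
  have hsu : s = Finset.univ := Finset.eq_univ_of_card s hscard
  -- every vertex has positive degree, hence N = univ
  have hNu : N = Finset.univ := by
    refine Finset.eq_univ_of_forall (fun u => ?_)
    have hu : u ∈ Z := hsZ u (hsu ▸ Finset.mem_univ u)
    have hdu : 1 ≤ deg w u := by
      have hh := hheavy u hu
      by_contra hd
      push_neg at hd
      have h0 : deg w u = 0 := by omega
      rw [h0, Nat.mul_zero] at hh
      have h00 : (n - 1) * maxDeg w = 0 := Nat.le_zero.mp hh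
      rcases Nat.mul_eq_zero.mp h00 with h | h
      · omega
      · omega
    obtain ⟨x, hx⟩ : ∃ x, w u x ≠ 0 := by
      by_contra hall
      push_neg at hall
      have : deg w u = 0 := Finset.sum_eq_zero (fun x _ => hall x)
      omega
    have hxu : x ≠ u := by rintro rfl; exact hx (hloop _)
    refine Finset.mem_biUnion.mpr ⟨x, hsu ▸ Finset.mem_univ x, ?_⟩
    simp only [hnbr, Finset.mem_filter, Finset.mem_univ, true_and]
    exact ⟨hxu, by rw [hsymm]; exact Nat.one_le_iff_ne_zero.mpr hx,
      Nat.one_le_iff_ne_zero.mpr hx⟩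
  have hNn : N.card = n := by rw [hNu]; simp [hn']
  omega

end Aux

/-- If every vertex of `Z` is heavy and the subgraph of the support induced
by `Z` is bipartite, then some matching of `G` saturates every vertex of `Z`. -/

theorem heavy_bipartite_saturating_matching {V : Type} [Fintype V] [DecidableEq V]
    (w : V → V → ℕ) (hsymm : ∀ u v, w u v = w v u) (hloop : ∀ v, w v v = 0)
    (hn : 2 ≤ Fintype.card V) (hΔ : 1 ≤ maxDeg w)
    (Z : Set V)
    (hheavy : ∀ v ∈ Z, (Fintype.card V - 1) * maxDeg w ≤ Fintype.card V * deg w v)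
    (hbip : BipartiteOn (support w) Z) :
    ∃ M : Finset (Sym2 V), IsMatching w M ∧ ∀ v ∈ Z, Saturates M v := by
  classical
  obtain ⟨A, hA⟩ := hbip
  set nbr : V → Finset V := fun v => Finset.univ.filter (fun u => (support w).Adj v u) with hnbr
  set t : V → Finset V := fun v => if v ∈ Z then nbr v else Finset.univ with ht
  -- Hall's condition
  have hall : ∀ s : Finset V, s.card ≤ (s.biUnion t).card := by
    intro s
    by_cases hsZ : ∀ v ∈ s, v ∈ Z
    · have hbu : s.biUnion t = s.biUnion nbr := by
        refine Finset.biUnion_congr rfl (fun v hv => ?_)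
        simp only [ht]
        rw [if_pos (hsZ v hv)]
      rw [hbu, hnbr]
      exact hall_count w hsymm hloop hn hΔ Z hheavy s hsZ
    · push_neg at hsZ
      obtain ⟨v, hv, hvZ⟩ := hsZ
      have hsub : (Finset.univ : Finset V) ⊆ s.biUnion t := by
        have htv : t v = Finset.univ := by simp only [ht]; rw [if_neg hvZ]
        exact htv ▸ Finset.subset_biUnion_of_mem t hv
      calc s.card ≤ Fintype.card V := Finset.card_le_univ s
        _ = (Finset.univ : Finset V).card := (Finset.card_univ).symm
        _ ≤ (s.biUnion t).card := Finset.card_le_card hsub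
  obtain ⟨f, hfinj, hft⟩ := (Finset.all_card_le_biUnion_card_iff_exists_injective t).mp hall
  have hfadj : ∀ v ∈ Z, (support w).Adj v (f v) := by
    intro v hv
    have hm := hft v
    simp only [ht] at hm
    rw [if_pos hv] at hm
    simp only [hnbr, Finset.mem_filter] at hm
    exact hm.2
  have hfbij : Function.Bijective f := Finite.injective_iff_bijective.mp hfinj
  set e : Equiv.Perm V := Equiv.ofBijective f hfbij with he
  have hecoe : ∀ x, e x = f x := fun x => rfl
  set M0 : ℕ := orderOf e with hM0
  have hM0pos : 0 < M0 := orderOf_pos e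
  have hiter : ∀ x, (⇑e)^[M0] x = x := by
    intro x
    have h1 : e ^ M0 = 1 := pow_orderOf_eq_one e
    have h2 := congrArg (fun (p : Equiv.Perm V) => p x) h1
    simpa [← Equiv.Perm.coe_pow] using h2
  have hLI : Function.LeftInverse (⇑e.symm) (⇑e) := e.symm_apply_apply
  have hLIiter : ∀ k : ℕ, ∀ x, (⇑e.symm)^[k] ((⇑e)^[k] x) = x :=
    fun k => hLI.iterate k
  -- cyclic vertices: all forward iterates stay in Z
  set Cyc : V → Prop := fun z => ∀ k : ℕ, (⇑e)^[k] z ∈ Z with hCyc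
  have hiter_mul : ∀ (s : ℕ) (x : V), (⇑e)^[M0 * s] x = x := by
    intro s
    induction s with
    | zero => intro x; simp
    | succ k ih =>
      intro x
      have hms : M0 * (k + 1) = M0 * k + M0 := by ring
      rw [hms, Function.iterate_add_apply, hiter x]
      exact ih x
  -- if all backward iterates stay in Z then cyclic
  have hex : ∀ z, z ∈ Z → ¬ Cyc z → ∃ j : ℕ, (⇑e.symm)^[j + 1] z ∉ Z := by
    intro z hz hnc
    by_contra hco
    push_neg at hco
    have hall2 : ∀ j : ℕ, (⇑e.symm)^[j] z ∈ Z := by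
      intro j
      cases j with
      | zero => simpa using hz
      | succ j => exact hco j
    refine hnc (fun k => ?_)
    have hTk : (M0 * (k + 1) - k) + k = M0 * (k + 1) := by
      have hk1 : k ≤ M0 * (k + 1) := by
        calc k ≤ k + 1 := by omega
          _ ≤ M0 * (k + 1) := Nat.le_mul_of_pos_left _ hM0pos
      omega
    have h1 : (⇑e)^[M0 * (k + 1) - k] ((⇑e)^[k] z) = z := by
      rw [← Function.iterate_add_apply, hTk]
      exact hiter_mul (k + 1) z
    have h2 : (⇑e.symm)^[M0 * (k + 1) - k] z = (⇑e)^[k] z := by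
      conv_lhs => rw [← h1]
      exact hLIiter _ _
    rw [← h2]
    exact hall2 _
  set dS : V → ℕ := fun z =>
    if h : ∃ j : ℕ, (⇑e.symm)^[j + 1] z ∉ Z then Nat.find h else 0 with hdS
  -- basic cyclic facts
  have hCycSucc : ∀ z, Cyc z → Cyc (e z) := by
    intro z hc k
    have h1 : (⇑e)^[k] (e z) = (⇑e)^[k + 1] z := (Function.iterate_succ_apply (⇑e) k z).symm
    rw [h1]
    exact hc (k + 1)
  have hCycPred : ∀ z, z ∈ Z → Cyc (e z) → Cyc z := by
    intro z hz hc k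
    cases k with
    | zero => simpa using hz
    | succ k =>
      rw [Function.iterate_succ_apply]
      exact hc k
  have hCycSymmMem : ∀ z, Cyc z → e.symm z ∈ Z := by
    intro z hc
    have h1 : e ((⇑e)^[M0 - 1] z) = z := by
      have h2 : (⇑e)^[(M0 - 1) + 1] z = z := by
        have hm1 : (M0 - 1) + 1 = M0 := by omega
        rw [hm1]; exact hiter z
      rw [Function.iterate_succ_apply'] at h2
      exact h2
    have h3 : e.symm z = (⇑e)^[M0 - 1] z := by
      conv_lhs => rw [← h1]
      exact e.symm_apply_apply _
    rw [h3]
    exact hc (M0 - 1)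
  have hCycSymm : ∀ z, Cyc z → Cyc (e.symm z) := by
    intro z hc
    refine hCycPred (e.symm z) (hCycSymmMem z hc) ?_
    rw [e.apply_symm_apply]
    exact hc
  -- the dS shift lemma
  have hshift : ∀ z, z ∈ Z → ∀ h1 : (∃ j : ℕ, (⇑e.symm)^[j + 1] z ∉ Z),
      dS (e z) = dS z + 1 := by
    intro z hz h1
    have hrw : ∀ j : ℕ, (⇑e.symm)^[j + 1] (e z) = (⇑e.symm)^[j] z := by
      intro j
      rw [Function.iterate_succ_apply, e.symm_apply_apply]
    have h2 : ∃ j : ℕ, (⇑e.symm)^[j + 1] (e z) ∉ Z := by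
      refine ⟨Nat.find h1 + 1, ?_⟩
      rw [hrw]
      exact Nat.find_spec h1
    simp only [hdS]
    rw [dif_pos h1, dif_pos h2]
    rw [Nat.find_eq_iff]
    constructor
    · rw [hrw]
      exact Nat.find_spec h1
    · intro k hk
      cases k with
      | zero =>
        rw [not_not, hrw]
        simpa using hz
      | succ k =>
        rw [not_not, hrw]
        have hkf : k < Nat.find h1 := by omega
        exact not_not.mp (Nat.find_min h1 hkf)
  -- selection
  set sel : V → Prop := fun z => z ∈ Z ∧
    ((Cyc z ∧ z ∈ A) ∨ (¬ Cyc z ∧ Even (dS z))) with hsel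
  set M : Finset (Sym2 V) :=
    (Finset.univ.filter sel).image (fun z => s(z, f z)) with hM
  have hselZ : ∀ z, sel z → z ∈ Z := fun z hz => hz.1
  -- no two selected vertices are f-consecutive
  have hkey : ∀ z1 z2, sel z1 → sel z2 → z1 = f z2 → False := by
    intro z1 z2 h1 h2 heq0
    have heq : z1 = e z2 := by rw [hecoe]; exact heq0
    have hz1Z := h1.1
    have hz2Z := h2.1
    by_cases hc : Cyc z2
    · have hc1 : Cyc z1 := heq ▸ hCycSucc z2 hc
      have hA1 : z1 ∈ A := by
        rcases h1.2 with ⟨_, hA1⟩ | ⟨hnc, _⟩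
        · exact hA1
        · exact absurd hc1 hnc
      have hA2 : z2 ∈ A := by
        rcases h2.2 with ⟨_, hA2⟩ | ⟨hnc, _⟩
        · exact hA2
        · exact absurd hc hnc
      have hadj : (support w).Adj z2 z1 := heq0 ▸ hfadj z2 hz2Z
      exact ((hA hz2Z hz1Z hadj).mp hA2) hA1
    · have hnc1 : ¬ Cyc z1 := by
        intro hc1
        exact hc (hCycPred z2 hz2Z (heq ▸ hc1))
      have hE1 : Even (dS z1) := by
        rcases h1.2 with ⟨hc1, _⟩ | ⟨_, hE⟩
        · exact absurd hc1 hnc1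
        · exact hE
      have hE2 : Even (dS z2) := by
        rcases h2.2 with ⟨hc2, _⟩ | ⟨_, hE⟩
        · exact absurd hc2 hc
        · exact hE
      have hstep := hshift z2 hz2Z (hex z2 hz2Z hc)
      rw [← heq] at hstep
      rw [hstep] at hE1
      rcases hE1 with ⟨a, ha⟩
      rcases hE2 with ⟨b, hb⟩
      omega
  refine ⟨M, ⟨?_, ?_, ?_⟩, ?_⟩
  · -- no diagonal
    intro ed hed
    rw [hM, Finset.mem_image] at hed
    obtain ⟨z, hz, rfl⟩ := hed
    rw [Finset.mem_filter] at hz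
    have hadj := hfadj z (hselZ z hz.2)
    rw [Sym2.mk_isDiag_iff]
    exact hadj.1
  · -- weights at least one
    intro u v huv
    rw [hM, Finset.mem_image] at huv
    obtain ⟨z, hz, hzeq⟩ := huv
    rw [Finset.mem_filter] at hz
    have hadj := hfadj z (hselZ z hz.2)
    rcases Sym2.eq_iff.mp hzeq.symm with ⟨h1, h2⟩ | ⟨h1, h2⟩
    · rw [h1, h2]
      exact hadj.2.1
    · rw [h1, h2]
      exact hadj.2.2
  · -- pairwise disjoint
    intro e1 he1 e2 he2 hne x hx1 hx2
    rw [hM, Finset.mem_image] at he1 he2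
    obtain ⟨z1, hz1, he1'⟩ := he1
    obtain ⟨z2, hz2, he2'⟩ := he2
    subst he1' he2'
    rw [Finset.mem_filter] at hz1 hz2
    have hs1 := hz1.2
    have hs2 := hz2.2
    rcases Sym2.mem_iff.mp hx1 with h1 | h1 <;>
      rcases Sym2.mem_iff.mp hx2 with h2 | h2
    · have hzz : z1 = z2 := h1.symm.trans h2
      exact hne (by rw [hzz])
    · exact hkey z1 z2 hs1 hs2 (h1.symm.trans h2)
    · exact hkey z2 z1 hs2 hs1 (h2.symm.trans h1)
    · have hzz : z1 = z2 := hfinj (h1.symm.trans h2)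
      exact hne (by rw [hzz])
  · -- saturation
    intro v hv
    by_cases hsv : sel v
    · refine ⟨s(v, f v), ?_, Sym2.mem_mk_left v (f v)⟩
      rw [hM, Finset.mem_image]
      exact ⟨v, Finset.mem_filter.mpr ⟨Finset.mem_univ v, hsv⟩, rfl⟩
    · -- v not selected: its predecessor is selected
      have hvsel : ¬ ((Cyc v ∧ v ∈ A) ∨ (¬ Cyc v ∧ Even (dS v))) := by
        intro h
        exact hsv ⟨hv, h⟩
      push_neg at hvsel
      have hez : e (e.symm v) = v := e.apply_symm_apply v
      have hfz : f (e.symm v) = v := by rw [← hecoe]; exact hez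
      by_cases hc : Cyc v
      · have hvA : v ∉ A := hvsel.1 hc
        have hzZ : e.symm v ∈ Z := hCycSymmMem v hc
        have hzc : Cyc (e.symm v) := hCycSymm v hc
        have hadj : (support w).Adj (e.symm v) v := by
          have hadj0 := hfadj _ hzZ
          rwa [hfz] at hadj0
        have hzA : (e.symm v) ∈ A := (hA hzZ hv hadj).mpr hvA
        refine ⟨s(e.symm v, f (e.symm v)), ?_, ?_⟩
        · rw [hM, Finset.mem_image]
          exact ⟨e.symm v,
            Finset.mem_filter.mpr ⟨Finset.mem_univ _, ⟨hzZ, Or.inl ⟨hzc, hzA⟩⟩⟩, rfl⟩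
        · exact Sym2.mem_iff.mpr (Or.inr hfz.symm)
      · -- non-cyclic case
        have hodd : ¬ Even (dS v) := hvsel.2 hc
        have hfind := hex v hv hc
        have hdSv : dS v = Nat.find hfind := by
          simp only [hdS]
          rw [dif_pos hfind]
        have hpos : 0 < Nat.find hfind := by
          rcases Nat.eq_zero_or_pos (Nat.find hfind) with h0 | h
          · exfalso
            apply hodd
            rw [hdSv, h0]
            exact Even.zero
          · exact h
        have hzZ : e.symm v ∈ Z := by
          have hmin := Nat.find_min hfind hpos
          rw [not_not] at hmin
          simpa using hmin
        have hznc : ¬ Cyc (e.symm v) := by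
          intro hcz
          apply hc
          have hs := hCycSucc _ hcz
          rwa [hez] at hs
        have hfindz := hex _ hzZ hznc
        have hstep := hshift _ hzZ hfindz
        rw [hez] at hstep
        have hEz : Even (dS (e.symm v)) := by
          rcases Nat.even_or_odd (dS (e.symm v)) with h | h
          · exact h
          · exfalso
            apply hodd
            rw [hstep]
            exact h.add_one
        refine ⟨s(e.symm v, f (e.symm v)), ?_, ?_⟩
        · rw [hM, Finset.mem_image]
          exact ⟨e.symm v,
            Finset.mem_filter.mpr ⟨Finset.mem_univ _, ⟨hzZ, Or.inr ⟨hznc, hEz⟩⟩⟩, rfl⟩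
        · exact Sym2.mem_iff.mpr (Or.inr hfz.symm)



end NSBPaper
end

section
/- Let G be a loopless multigraph with maximum degree Δ ≥ 1, and suppose the subgraph of the support of G induced by the set of all vertices of maximum degree Δ is bipartite. Then there exists a matching of G that saturates every vertex of maximum degree. -/
open scoped Classical

namespace NSBPaper

variable {V : Type} [Fintype V] [DecidableEq V]

/-- Core combinatorial lemma: given an injective choice of a neighbor for each
vertex of `S`, with `S` inside a "bipartite-inducing" set `Z`, there is a matching
covering `S` whose vertices all lie in `S ∪ f '' S`. -/
lemma lemA {V : Type} [Fintype V] [DecidableEq V] (G : SimpleGraph V) (A : Set V) (Z : Set V)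
    (hbip : ∀ ⦃u v : V⦄, u ∈ Z → v ∈ Z → G.Adj u v → (u ∈ A ↔ v ∉ A)) (f : V → V) :
    ∀ n (S : Finset V), S.card ≤ n → ↑S ⊆ Z → Set.InjOn f ↑S →
    (∀ z ∈ S, G.Adj z (f z)) →
    ∃ M : Finset (Sym2 V),
      (∀ u v : V, s(u, v) ∈ M → G.Adj u v) ∧
      (∀ e ∈ M, ∀ e' ∈ M, e ≠ e' → ∀ x : V, x ∈ e → x ∉ e') ∧
      (∀ z ∈ S, ∃ e ∈ M, z ∈ e) ∧
      (∀ e ∈ M, ∀ x : V, x ∈ e → x ∈ S ∨ ∃ z ∈ S, f z = x) := by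
  intro n
  induction n with
  | zero =>
    intro S hcard _ _ _
    refine ⟨∅, ?_, ?_, ?_, ?_⟩ <;> simp_all [Finset.card_eq_zero.mp (Nat.le_zero.mp hcard)]
  | succ n ih =>
    intro S hcard hSZ hinj hadj
    rcases S.eq_empty_or_nonempty with rfl | hne
    · exact ⟨∅, by simp, by simp, by simp, by simp⟩
    by_cases hstart : ∃ z₀ ∈ S, ∀ z ∈ S, f z ≠ z₀
    · -- path case: peel z₀ (and possibly f z₀)
      obtain ⟨z₀, hz₀S, hz₀nf⟩ := hstart
      set z₁ := f z₀ with hz₁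
      have hadj01 : G.Adj z₀ z₁ := hadj z₀ hz₀S
      set S' := (S.erase z₀).erase z₁ with hS'
      have hS'sub : S' ⊆ S := (Finset.erase_subset _ _).trans (Finset.erase_subset _ _)
      have hz₀S' : z₀ ∉ S' := fun h => (Finset.mem_erase.mp (Finset.mem_of_mem_erase h)).1 rfl
      have hz₁S' : z₁ ∉ S' := fun h => (Finset.mem_erase.mp h).1 rfl
      have hcard' : S'.card ≤ n := by
        have : S'.card < S.card := by
          refine Finset.card_lt_card ⟨hS'sub, fun h => hz₀S' (h hz₀S)⟩
        omega
      obtain ⟨M', hM'adj, hM'dis, hM'cov, hM'cl⟩ := ih S' hcard'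
        (fun x hx => hSZ (hS'sub hx)) (hinj.mono (by exact_mod_cast hS'sub))
        (fun z hz => hadj z (hS'sub hz))
      -- vertices of M' avoid z₀ and z₁
      have hkey : ∀ x : V, (x ∈ S' ∨ ∃ z ∈ S', f z = x) → x ≠ z₀ ∧ x ≠ z₁ := by
        rintro x (hx | ⟨z, hzS', rfl⟩)
        · exact ⟨fun h => hz₀S' (h ▸ hx), fun h => hz₁S' (h ▸ hx)⟩
        · constructor
          · exact fun h => hz₀nf z (hS'sub hzS') h
          · intro h
            have : z = z₀ := hinj (by exact_mod_cast hS'sub hzS') (by exact_mod_cast hz₀S) h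
            exact hz₀S' (this ▸ hzS')
      have hnotmem : ∀ e ∈ M', z₀ ∉ e ∧ z₁ ∉ e := by
        intro e he
        constructor
        · intro hz; exact (hkey z₀ (hM'cl e he z₀ hz)).1 rfl
        · intro hz; exact (hkey z₁ (hM'cl e he z₁ hz)).2 rfl
      have hnew : s(z₀, z₁) ∉ M' := fun h => (hnotmem _ h).1 (by simp)
      refine ⟨insert s(z₀, z₁) M', ?_, ?_, ?_, ?_⟩
      · intro u v huv
        rcases Finset.mem_insert.mp huv with h | h
        · rcases Sym2.eq_iff.mp h with ⟨rfl, rfl⟩ | ⟨rfl, rfl⟩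
          · exact hadj01
          · exact hadj01.symm
        · exact hM'adj u v h
      · intro e he e' he' hee' x hxe hxe'
        rcases Finset.mem_insert.mp he with he0 | hem
        · rcases Finset.mem_insert.mp he' with he0' | hem'
          · exact hee' (he0.trans he0'.symm)
          · subst he0
            rcases Sym2.mem_iff.mp hxe with rfl | rfl
            · exact (hnotmem _ hem').1 hxe'
            · exact (hnotmem _ hem').2 hxe'
        · rcases Finset.mem_insert.mp he' with he0' | hem'
          · subst he0'
            rcases Sym2.mem_iff.mp hxe' with rfl | rfl
            · exact (hnotmem _ hem).1 hxe
            · exact (hnotmem _ hem).2 hxe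
          · exact hM'dis e hem e' hem' hee' x hxe hxe'
      · intro z hzS
        by_cases hz : z ∈ S'
        · obtain ⟨e, he, hze⟩ := hM'cov z hz
          exact ⟨e, Finset.mem_insert_of_mem he, hze⟩
        · have : z = z₀ ∨ z = z₁ := by
            by_contra hcon
            push_neg at hcon
            exact hz (Finset.mem_erase.mpr ⟨hcon.2, Finset.mem_erase.mpr ⟨hcon.1, hzS⟩⟩)
          refine ⟨s(z₀, z₁), Finset.mem_insert_self _ _, ?_⟩
          rcases this with rfl | rfl <;> simp
      · intro e he x hxe
        rcases Finset.mem_insert.mp he with rfl | he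
        · rcases Sym2.mem_iff.mp hxe with rfl | rfl
          · exact Or.inl hz₀S
          · exact Or.inr ⟨z₀, hz₀S, rfl⟩
        · rcases hM'cl e he x hxe with hx | ⟨z, hz, rfl⟩
          · exact Or.inl (hS'sub hx)
          · exact Or.inr ⟨z, hS'sub hz, rfl⟩
    · -- cycle case
      push_neg at hstart
      have himg : S.image f = S := by
        have hsub : S ⊆ S.image f := by
          intro z hz
          obtain ⟨y, hyS, hy⟩ := hstart z hz
          exact Finset.mem_image.mpr ⟨y, hyS, hy⟩
        exact (Finset.eq_of_subset_of_card_le hsub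
          (le_of_eq (Finset.card_image_of_injOn hinj))).symm
      have hmap : ∀ z ∈ S, f z ∈ S := by
        intro z hz
        have := Finset.mem_image_of_mem f hz
        rwa [himg] at this
      obtain ⟨z₀, hz₀⟩ := hne
      have hiter : ∀ i, f^[i] z₀ ∈ S := by
        intro i
        induction i with
        | zero => simpa using hz₀
        | succ i ihh => rw [Function.iterate_succ_apply']; exact hmap _ ihh
      have hmem : ∀ i, f^[i] z₀ ∈ (↑S : Set V) := fun i => Finset.mem_coe.mpr (hiter i)
      have hcancel : ∀ i m, f^[i + m] z₀ = f^[i] z₀ → f^[m] z₀ = z₀ := by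
        intro i
        induction i with
        | zero => intro m h; simpa using h
        | succ i ihh =>
          intro m h
          apply ihh
          rw [show i + 1 + m = (i + m) + 1 by omega] at h
          rw [Function.iterate_succ_apply', Function.iterate_succ_apply'] at h
          exact hinj (hmem _) (hmem _) h
      have hex : ∃ m, 0 < m ∧ f^[m] z₀ = z₀ := by
        have hlt : Fintype.card {x // x ∈ S} < Fintype.card (Fin (S.card + 1)) := by
          simp [Fintype.card_coe]
        obtain ⟨i, j, hij, hEq⟩ := Fintype.exists_ne_map_eq_of_card_lt
          (fun i : Fin (S.card + 1) => (⟨f^[(i : ℕ)] z₀, hiter _⟩ : {x // x ∈ S})) hlt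
        have hEq' : f^[(i : ℕ)] z₀ = f^[(j : ℕ)] z₀ := congrArg Subtype.val hEq
        have hij' : (i : ℕ) ≠ (j : ℕ) := fun h => hij (Fin.ext h)
        rcases Nat.lt_or_ge (i : ℕ) (j : ℕ) with h | h
        · refine ⟨(j : ℕ) - (i : ℕ), by omega, ?_⟩
          apply hcancel (i : ℕ)
          rw [show (i : ℕ) + ((j : ℕ) - (i : ℕ)) = (j : ℕ) by omega]
          exact hEq'.symm
        · refine ⟨(i : ℕ) - (j : ℕ), by omega, ?_⟩
          apply hcancel (j : ℕ)
          rw [show (j : ℕ) + ((i : ℕ) - (j : ℕ)) = (i : ℕ) by omega]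
          exact hEq'
      set k := Nat.find hex with hkdef
      obtain ⟨hkpos, hkz⟩ : 0 < k ∧ f^[k] z₀ = z₀ := Nat.find_spec hex
      have hkmin : ∀ m, 0 < m → m < k → f^[m] z₀ ≠ z₀ := by
        intro m hm hmk h
        exact Nat.find_min hex hmk ⟨hm, h⟩
      have hinjk : ∀ i, i < k → ∀ j, j < k → f^[i] z₀ = f^[j] z₀ → i = j := by
        intro i hi j hj h
        rcases Nat.lt_trichotomy i j with hij | hij | hij
        · exact absurd (hcancel i (j - i) (by rw [show i + (j - i) = j by omega]; exact h.symm))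
            (hkmin (j - i) (by omega) (by omega))
        · exact hij
        · exact absurd (hcancel j (i - j) (by rw [show j + (i - j) = i by omega]; exact h))
            (hkmin (i - j) (by omega) (by omega))
      have hA : ∀ i, (f^[i] z₀ ∈ A ↔ (Even i ↔ z₀ ∈ A)) := by
        intro i
        induction i with
        | zero => simp
        | succ i ihh =>
          have hadji : G.Adj (f^[i] z₀) (f^[i + 1] z₀) := by
            rw [Function.iterate_succ_apply']; exact hadj _ (hiter i)
          have hb := hbip (hSZ (hmem i)) (hSZ (hmem (i + 1))) hadji
          rw [Nat.even_add_one]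
          tauto
      have hkeven : Even k := by
        have h := hA k
        rw [hkz] at h
        by_cases hz : z₀ ∈ A <;> tauto
      have hk1 : k ≠ 1 := by
        intro h
        have h2 : f z₀ = z₀ := by rw [h] at hkz; simpa using hkz
        exact (hadj z₀ hz₀).ne' h2
      have hidx : ∀ i, i < k / 2 → 2 * i < k ∧ 2 * i + 1 < k := by
        intro i hi
        obtain ⟨t, ht⟩ := hkeven
        omega
      set O := (Finset.range k).image (fun i => f^[i] z₀) with hOdef
      have hOS : O ⊆ S := by
        intro x hx
        obtain ⟨i, _, rfl⟩ := Finset.mem_image.mp hx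
        exact hiter i
      have hOmem : ∀ a, a < k → f^[a] z₀ ∈ O :=
        fun a ha => Finset.mem_image.mpr ⟨a, Finset.mem_range.mpr ha, rfl⟩
      have hz₀O : z₀ ∈ O := by
        have := hOmem 0 hkpos
        simpa using this
      set MO := (Finset.range (k / 2)).image
        (fun i => s(f^[2 * i] z₀, f^[2 * i + 1] z₀)) with hMOdef
      have hadj2 : ∀ i, G.Adj (f^[2 * i] z₀) (f^[2 * i + 1] z₀) := by
        intro i
        rw [Function.iterate_succ_apply']
        exact hadj _ (hiter _)
      have hMOadj : ∀ u v : V, s(u, v) ∈ MO → G.Adj u v := by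
        intro u v huv
        obtain ⟨i, _, hEq⟩ := Finset.mem_image.mp huv
        rcases Sym2.eq_iff.mp hEq with ⟨h1, h2⟩ | ⟨h1, h2⟩
        · rw [← h1, ← h2]; exact hadj2 i
        · rw [← h1, ← h2]; exact (hadj2 i).symm
      have hMOvert : ∀ e ∈ MO, ∀ x : V, x ∈ e → ∃ a, a < k ∧ f^[a] z₀ = x := by
        intro e he x hx
        obtain ⟨i, hi, rfl⟩ := Finset.mem_image.mp he
        have h2 := hidx i (Finset.mem_range.mp hi)
        rcases Sym2.mem_iff.mp hx with rfl | rfl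
        · exact ⟨2 * i, h2.1, rfl⟩
        · exact ⟨2 * i + 1, h2.2, rfl⟩
      have hMOdis : ∀ e ∈ MO, ∀ e' ∈ MO, e ≠ e' → ∀ x : V, x ∈ e → x ∉ e' := by
        intro e he e' he' hee x hx hx'
        obtain ⟨i, hi, rfl⟩ := Finset.mem_image.mp he
        obtain ⟨j, hj, rfl⟩ := Finset.mem_image.mp he'
        have hij : i ≠ j := fun h => hee (by rw [h])
        have h2i := hidx i (Finset.mem_range.mp hi)
        have h2j := hidx j (Finset.mem_range.mp hj)
        have hamem : ∃ a, (a = 2 * i ∨ a = 2 * i + 1) ∧ f^[a] z₀ = x := by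
          rcases Sym2.mem_iff.mp hx with h | h
          · exact ⟨2 * i, Or.inl rfl, h.symm⟩
          · exact ⟨2 * i + 1, Or.inr rfl, h.symm⟩
        have hbmem : ∃ b, (b = 2 * j ∨ b = 2 * j + 1) ∧ f^[b] z₀ = x := by
          rcases Sym2.mem_iff.mp hx' with h | h
          · exact ⟨2 * j, Or.inl rfl, h.symm⟩
          · exact ⟨2 * j + 1, Or.inr rfl, h.symm⟩
        obtain ⟨a, haor, haEq⟩ := hamem
        obtain ⟨b, hbor, hbEq⟩ := hbmem
        have hab : a = b := by
          apply hinjk a (by omega) b (by omega)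
          rw [haEq, hbEq]
        omega
      have hMOcov : ∀ z ∈ O, ∃ e ∈ MO, z ∈ e := by
        intro z hz
        obtain ⟨i, hi, rfl⟩ := Finset.mem_image.mp hz
        rw [Finset.mem_range] at hi
        have hdvd : 2 ∣ k := hkeven.two_dvd
        have hlt : i / 2 < k / 2 := Nat.div_lt_div_of_lt_of_dvd hdvd hi
        refine ⟨s(f^[2 * (i / 2)] z₀, f^[2 * (i / 2) + 1] z₀),
          Finset.mem_image.mpr ⟨i / 2, Finset.mem_range.mpr hlt, rfl⟩, ?_⟩
        have hmod := Nat.div_add_mod i 2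
        have : i = 2 * (i / 2) ∨ i = 2 * (i / 2) + 1 := by omega
        rcases this with h | h
        · exact Sym2.mem_iff.mpr (Or.inl (congrArg (fun m => f^[m] z₀) h))
        · exact Sym2.mem_iff.mpr (Or.inr (congrArg (fun m => f^[m] z₀) h))
      set S' := S \ O with hS'def
      have hS'sub : S' ⊆ S := Finset.sdiff_subset
      have hcard' : S'.card ≤ n := by
        have hlt : S'.card < S.card :=
          Finset.card_lt_card ⟨hS'sub, fun h => (Finset.mem_sdiff.mp (h hz₀)).2 hz₀O⟩
        omega
      obtain ⟨M', hM'adj, hM'dis, hM'cov, hM'cl⟩ := ih S' hcard'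
        (fun x hx => hSZ (Finset.mem_coe.mpr (hS'sub hx)))
        (hinj.mono (by exact_mod_cast hS'sub))
        (fun z hz => hadj z (hS'sub hz))
      have havoid : ∀ x : V, (x ∈ S' ∨ ∃ z ∈ S', f z = x) → x ∉ O := by
        rintro x (hx | ⟨z, hzS', rfl⟩) hxO
        · exact (Finset.mem_sdiff.mp hx).2 hxO
        · obtain ⟨i, hi, hEq⟩ := Finset.mem_image.mp hxO
          rw [Finset.mem_range] at hi
          have hzS : z ∈ S := hS'sub hzS'
          rcases Nat.eq_zero_or_pos i with rfl | hipos
          · obtain ⟨m, hm⟩ : ∃ m, k = m + 1 := ⟨k - 1, by omega⟩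
            have hk' : f (f^[m] z₀) = z₀ := by
              have h := Function.iterate_succ_apply' f m z₀
              rw [← h, show Nat.succ m = k from by omega]
              exact hkz
            have h1 : f (f^[m] z₀) = f z := by
              rw [hk']
              simpa using hEq
            have h2 : f^[m] z₀ = z :=
              hinj (hmem _) (Finset.mem_coe.mpr hzS) h1
            exact (Finset.mem_sdiff.mp hzS').2 (h2 ▸ hOmem m (by omega))
          · obtain ⟨m, hm⟩ : ∃ m, i = m + 1 := ⟨i - 1, by omega⟩
            subst hm
            have h1 : f (f^[m] z₀) = f z := by
              rw [← Function.iterate_succ_apply' f m z₀, show Nat.succ m = m + 1 from rfl]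
              exact hEq
            have h2 : f^[m] z₀ = z :=
              hinj (hmem _) (Finset.mem_coe.mpr hzS) h1
            exact (Finset.mem_sdiff.mp hzS').2 (h2 ▸ hOmem m (by omega))
      have hM'notO : ∀ e ∈ M', ∀ x : V, x ∈ e → x ∉ O := by
        intro e he x hx
        exact havoid x (hM'cl e he x hx)
      refine ⟨MO ∪ M', ?_, ?_, ?_, ?_⟩
      · intro u v huv
        rcases Finset.mem_union.mp huv with h | h
        · exact hMOadj u v h
        · exact hM'adj u v h
      · intro e he e' he' hee x hx hx'
        rcases Finset.mem_union.mp he with h1 | h1 <;> rcases Finset.mem_union.mp he' with h2 | h2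
        · exact hMOdis e h1 e' h2 hee x hx hx'
        · obtain ⟨a, ha, haEq⟩ := hMOvert e h1 x hx
          exact hM'notO e' h2 x hx' (haEq ▸ hOmem a ha)
        · obtain ⟨a, ha, haEq⟩ := hMOvert e' h2 x hx'
          exact hM'notO e h1 x hx (haEq ▸ hOmem a ha)
        · exact hM'dis e h1 e' h2 hee x hx hx'
      · intro z hzS
        by_cases hz : z ∈ O
        · obtain ⟨e, he, hze⟩ := hMOcov z hz
          exact ⟨e, Finset.mem_union_left _ he, hze⟩
        · obtain ⟨e, he, hze⟩ := hM'cov z (Finset.mem_sdiff.mpr ⟨hzS, hz⟩)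
          exact ⟨e, Finset.mem_union_right _ he, hze⟩
      · intro e he x hx
        rcases Finset.mem_union.mp he with h | h
        · obtain ⟨a, ha, haEq⟩ := hMOvert e h x hx
          exact Or.inl (hOS (haEq ▸ hOmem a ha))
        · rcases hM'cl e h x hx with h1 | ⟨z, hz, rfl⟩
          · exact Or.inl (hS'sub h1)
          · exact Or.inr ⟨z, hS'sub hz, rfl⟩

/-- If the subgraph of the support induced by the vertices of maximum degree
is bipartite, then some matching saturates every vertex of maximum degree. -/
theorem maxdeg_bipartite_saturating_matching {V : Type} [Fintype V] [DecidableEq V]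
    (w : V → V → ℕ) (hsymm : ∀ u v, w u v = w v u) (hloop : ∀ v, w v v = 0)
    (hΔ : 1 ≤ maxDeg w)
    (hbip : BipartiteOn (support w) {v | deg w v = maxDeg w}) :
    ∃ M : Finset (Sym2 V), IsMatching w M ∧
      ∀ v : V, deg w v = maxDeg w → Saturates M v := by
  classical
  set Zf : Finset V := Finset.univ.filter (fun v => deg w v = maxDeg w) with hZfdef
  have hdegle : ∀ v : V, deg w v ≤ maxDeg w := fun v => Finset.le_sup (Finset.mem_univ v)
  have hZdeg : ∀ v ∈ Zf, deg w v = maxDeg w := fun v hv => (Finset.mem_filter.mp hv).2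
  -- Hall's condition
  have hall : ∀ s : Finset {x // x ∈ Zf},
      s.card ≤ (s.biUnion (fun z =>
        Finset.univ.filter (fun u => (support w).Adj z.val u))).card := by
    intro s
    set T := s.biUnion (fun z => Finset.univ.filter (fun u => (support w).Adj z.val u)) with hT
    set s' := s.image Subtype.val with hs'
    have hs'card : s'.card = s.card := Finset.card_image_of_injective s Subtype.val_injective
    have hmemT : ∀ v ∈ s', ∀ u : V, w v u ≠ 0 → u ∈ T := by
      intro v hv u hwu
      obtain ⟨z, hzs, hzv⟩ := Finset.mem_image.mp hv
      have hne : v ≠ u := fun h => hwu (h ▸ hloop v)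
      have hadj : (support w).Adj v u := ⟨hne, Nat.one_le_iff_ne_zero.mpr hwu,
        Nat.one_le_iff_ne_zero.mpr (by rw [hsymm]; exact hwu)⟩
      exact Finset.mem_biUnion.mpr ⟨z, hzs,
        Finset.mem_filter.mpr ⟨Finset.mem_univ u, hzv ▸ hadj⟩⟩
    have key : maxDeg w * s'.card ≤ maxDeg w * T.card := by
      calc maxDeg w * s'.card = ∑ v ∈ s', maxDeg w := by
              rw [Finset.sum_const, smul_eq_mul, mul_comm]
        _ = ∑ v ∈ s', deg w v := by
              refine Finset.sum_congr rfl fun v hv => ?_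
              obtain ⟨z, hzs, hzv⟩ := Finset.mem_image.mp hv
              exact (hZdeg v (hzv ▸ z.property)).symm
        _ = ∑ v ∈ s', ∑ u ∈ T, w v u := by
              refine Finset.sum_congr rfl fun v hv => ?_
              unfold deg
              rw [← Finset.sum_subset (Finset.subset_univ T)]
              intro u _ huT
              by_contra hwu
              exact huT (hmemT v hv u hwu)
        _ = ∑ u ∈ T, ∑ v ∈ s', w v u := Finset.sum_comm
        _ ≤ ∑ u ∈ T, deg w u := by
              refine Finset.sum_le_sum fun u _ => ?_
              unfold deg
              calc ∑ v ∈ s', w v u = ∑ v ∈ s', w u v :=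
                    Finset.sum_congr rfl fun v _ => hsymm v u
                _ ≤ ∑ v ∈ Finset.univ, w u v :=
                    Finset.sum_le_sum_of_subset (Finset.subset_univ s')
        _ ≤ ∑ u ∈ T, maxDeg w := Finset.sum_le_sum fun u _ => hdegle u
        _ = maxDeg w * T.card := by rw [Finset.sum_const, smul_eq_mul, mul_comm]
    have := Nat.le_of_mul_le_mul_left key (by omega)
    omega
  obtain ⟨f₀, hf₀inj, hf₀mem⟩ :=
    (Finset.all_card_le_biUnion_card_iff_exists_injective _).mp hall
  set f : V → V := fun v => if h : v ∈ Zf then f₀ ⟨v, h⟩ else v with hfdef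
  have hfadj : ∀ z ∈ Zf, (support w).Adj z (f z) := by
    intro z hz
    have h := hf₀mem ⟨z, hz⟩
    have h2 := (Finset.mem_filter.mp h).2
    simpa [hfdef, dif_pos hz] using h2
  have hfinj : Set.InjOn f ↑Zf := by
    intro a ha b hb hab
    have ha' : a ∈ Zf := ha
    have hb' : b ∈ Zf := hb
    simp only [hfdef, dif_pos ha', dif_pos hb'] at hab
    have := hf₀inj hab
    exact congrArg Subtype.val this
  obtain ⟨A, hA⟩ := hbip
  have hZfsub : ↑Zf ⊆ {v : V | deg w v = maxDeg w} := by
    intro x hx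
    exact (Finset.mem_filter.mp hx).2
  obtain ⟨M, hMadj, hMdis, hMcov, _⟩ :=
    lemA (support w) A {v : V | deg w v = maxDeg w} hA f Zf.card Zf le_rfl hZfsub hfinj hfadj
  refine ⟨M, ⟨?_, ?_, ?_⟩, ?_⟩
  · intro e he
    induction e using Sym2.ind with
    | _ u v =>
      intro hdiag
      exact (hMadj u v he).1 (Sym2.mk_isDiag_iff.mp hdiag)
  · intro u v huv
    exact (hMadj u v huv).2.1
  · exact hMdis
  · intro v hv
    exact hMcov v (Finset.mem_filter.mpr ⟨Finset.mem_univ v, hv⟩)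

end NSBPaper
end

section
/- Let G be a loopless multigraph on n ≥ 2 vertices with maximum degree Δ ≥ 1, and let S and Z be disjoint subsets of the vertex set such that (i) every vertex v ∈ Z satisfies n·d(v) ≥ (n−1)·Δ, and (ii) every edge incident to a vertex of Z has its other endpoint in S, i.e., w(v,u) = 0 whenever v ∈ Z and u ∉ S. Then |S| ≥ |Z|. -/
open scoped Classical

namespace NSBPaper

variable {V : Type} [Fintype V] [DecidableEq V]

/-- If `S` and `Z` are disjoint, every vertex of `Z` is heavy, and every
edge incident to `Z` ends in `S`, then `|S| ≥ |Z|`. -/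
theorem heavy_neighbors_card {V : Type} [Fintype V] [DecidableEq V]
    (w : V → V → ℕ) (hsymm : ∀ u v, w u v = w v u) (hloop : ∀ v, w v v = 0)
    (hn : 2 ≤ Fintype.card V) (hΔ : 1 ≤ maxDeg w)
    (S Z : Finset V) (hdisj : Disjoint S Z)
    (hheavy : ∀ v ∈ Z, (Fintype.card V - 1) * maxDeg w ≤ Fintype.card V * deg w v)
    (hedge : ∀ v ∈ Z, ∀ u : V, u ∉ S → w v u = 0) :
    Z.card ≤ S.card := by
  by_contra hlt
  push_neg at hlt
  set n := Fintype.card V with hn'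
  set Δ := maxDeg w with hΔ'
  -- sum of degrees over Z
  have hdegZ : ∀ v ∈ Z, deg w v = ∑ u ∈ S, w v u := by
    intro v hv
    rw [deg, ← Finset.sum_subset (Finset.subset_univ S)]
    intro u _ hu
    exact hedge v hv u hu
  have h1 : Z.card * ((n - 1) * Δ) ≤ n * ∑ v ∈ Z, deg w v := by
    rw [Finset.mul_sum]
    calc Z.card * ((n - 1) * Δ) = ∑ _v ∈ Z, (n - 1) * Δ := by
          rw [Finset.sum_const, smul_eq_mul]
      _ ≤ _ := Finset.sum_le_sum hheavy
  have h2 : ∑ v ∈ Z, deg w v ≤ S.card * Δ := by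
    calc ∑ v ∈ Z, deg w v = ∑ v ∈ Z, ∑ u ∈ S, w v u := Finset.sum_congr rfl hdegZ
      _ = ∑ u ∈ S, ∑ v ∈ Z, w u v := by
          rw [Finset.sum_comm]; exact Finset.sum_congr rfl fun u _ =>
            Finset.sum_congr rfl fun v _ => hsymm v u
      _ ≤ ∑ u ∈ S, deg w u := by
          refine Finset.sum_le_sum fun u _ => ?_
          exact Finset.sum_le_sum_of_subset (Finset.subset_univ Z)
      _ ≤ ∑ _u ∈ S, Δ := by
          refine Finset.sum_le_sum fun u _ => ?_
          exact Finset.le_sup (Finset.mem_univ u)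
      _ = S.card * Δ := by rw [Finset.sum_const, smul_eq_mul]
  have h3 : Z.card * ((n - 1) * Δ) ≤ n * (S.card * Δ) :=
    h1.trans (Nat.mul_le_mul_left n h2)
  have h4 : Z.card * (n - 1) ≤ n * S.card := by
    have := h3
    rw [show Z.card * ((n - 1) * Δ) = (Z.card * (n - 1)) * Δ by ring,
        show n * (S.card * Δ) = (n * S.card) * Δ by ring] at this
    exact Nat.le_of_mul_le_mul_right this hΔ
  have h5 : S.card + Z.card ≤ n := by
    rw [← Finset.card_union_of_disjoint hdisj]
    exact Finset.card_le_univ _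
  have hn1 : 1 ≤ n - 1 := by omega
  -- from hlt : S.card < Z.card
  have : (S.card + 1) * (n - 1) ≤ n * S.card :=
    le_trans (Nat.mul_le_mul_right _ hlt) h4
  have hn2 : n - 1 + 1 = n := by omega
  nlinarith [h5, hlt, hn2]


end NSBPaper
end
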